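/- arXiv:2603.28468 — 5 statements merged into one kernel-verified Lean document; each statement's English description precedes it below -/
import Mathlib

section
/- Let d ∈ {1,2,3} and let L ⊂ ℂ be a line containing one of the sides of the boundary of U_d (for d = 1 these are the lines Re w = ±1/2 and Im w = ±1/2; for d = 2 the lines Re w = ±1/2 and Im w = ±√2/2; for d = 3 the six lines ω₃^k·{w : Re w = 1/2}, k = 0,…,5, bounding the hexagon U₃). Let z ∈ ℚ(√(-d)) and let ẑ be the reflection of z across L. Then ẑ ∈ ℚ(√(-d)); moreover, if z = P/Q and ẑ = P'/Q' with P,Q coprime and P',Q' coprime in ℤ[ω_d], then |Q'| = |Q| (so the Ford spheres of z and ẑ have the same radius). -/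
/-- `ω_d`: the generator of the ring of integers of `ℚ(√(-d))`. -/
noncomputable def omegaD (d : ℕ) : ℂ :=
  if d % 4 = 3 then (1 + Complex.I * Real.sqrt d) / 2 else Complex.I * Real.sqrt d

/-- The ring of integers `ℤ[ω_d]` of `ℚ(√(-d))`, as a subset of `ℂ`. -/
def ringInt (d : ℕ) : Set ℂ := {z | ∃ a b : ℤ, z = (a : ℂ) + (b : ℂ) * omegaD d}

/-- `p` and `q` are coprime in `ℤ[ω_d]`. -/
def CoprimeIn (d : ℕ) (p q : ℂ) : Prop :=
  ∃ u v : ℂ, u ∈ ringInt d ∧ v ∈ ringInt d ∧ u * p + v * q = 1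

/-- `x` is an element of the field `ℚ(√(-d)) ⊆ ℂ`. -/
def inK (d : ℕ) (x : ℂ) : Prop :=
  ∃ p q : ℂ, p ∈ ringInt d ∧ q ∈ ringInt d ∧ q ≠ 0 ∧ x = p / q

/-- The point `p/q` of `ℂ ∪ {∞}`, with `p/0 = ∞`. -/
noncomputable def divC (p q : ℂ) : OnePoint ℂ :=
  if q = 0 then OnePoint.infty else ((p / q : ℂ) : OnePoint ℂ)

/-- Two points of `ℚ(√(-d)) ∪ {∞}` are Farey neighbours (joined by an edge of
the Farey graph `E_d`) if they have coprime representations `p₁/q₁`, `p₂/q₂`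
with `|p₁q₂ − p₂q₁| = 1`. -/
def FareyAdj (d : ℕ) (x y : OnePoint ℂ) : Prop :=
  ∃ p₁ q₁ p₂ q₂ : ℂ, p₁ ∈ ringInt d ∧ q₁ ∈ ringInt d ∧ p₂ ∈ ringInt d ∧ q₂ ∈ ringInt d ∧
    CoprimeIn d p₁ q₁ ∧ CoprimeIn d p₂ q₂ ∧ x = divC p₁ q₁ ∧ y = divC p₂ q₂ ∧
    ‖p₁ * q₂ - p₂ * q₁‖ = 1

/-- `f 0 → f 1 → ⋯ → f n` is a walk (of length `n`) in the Farey graph `E_d`. -/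
def IsWalk (d n : ℕ) (f : ℕ → OnePoint ℂ) : Prop := ∀ k, k < n → FareyAdj d (f k) (f (k + 1))

/-- `f 0 → ⋯ → f n` is a geodesic path in `E_d`: a walk of minimal length
among all walks with the same endpoints. -/
def IsGeodesicWalk (d n : ℕ) (f : ℕ → OnePoint ℂ) : Prop :=
  IsWalk d n f ∧ ∀ (m : ℕ) (g : ℕ → OnePoint ℂ), IsWalk d m g → g 0 = f 0 → g m = f n → n ≤ m

/-- Numerators of the convergents of `[a₁, a₂, …]` (`a 0` is unused):
`p₀ = 0`, `p₁ = 1`, `p_k = a_k p_{k−1} + p_{k−2}`. -/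
noncomputable def cfP (a : ℕ → ℂ) : ℕ → ℂ
  | 0 => 0
  | 1 => 1
  | (k + 2) => a (k + 2) * cfP a (k + 1) + cfP a k

/-- Denominators of the convergents of `[a₁, a₂, …]`:
`q₀ = 1`, `q₁ = a₁`, `q_k = a_k q_{k−1} + q_{k−2}`. -/
noncomputable def cfQ (a : ℕ → ℂ) : ℕ → ℂ
  | 0 => 1
  | 1 => a 1
  | (k + 2) => a (k + 2) * cfQ a (k + 1) + cfQ a k

/-- The walk `∞ → p₀/q₀ = 0 → p₁/q₁ → ⋯` along the convergents of `[a₁, a₂, …]`. -/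
noncomputable def cfWalk (a : ℕ → ℂ) : ℕ → OnePoint ℂ :=
  fun k => if k = 0 then OnePoint.infty else divC (cfP a (k - 1)) (cfQ a (k - 1))

/-- The lines containing the sides of `∂U_d`, parametrized by a unit normal
direction `u` and an offset `c`: the line is `{z : Re(conj(u)·z) = c}`.
For `d = 1` these are `Re w = ±1/2`, `Im w = ±1/2`; for `d = 2` the lines
`Re w = ±1/2`, `Im w = ±√2/2`; for `d = 3` the six lines
`ω₃^k·{w : Re w = 1/2}`, `k = 0,…,5`. -/
noncomputable def boundaryLineParams (d : ℕ) : Set (ℂ × ℝ) :=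
  if d = 1 then {((1 : ℂ), (1 / 2 : ℝ)), (1, -(1 / 2)), (Complex.I, 1 / 2), (Complex.I, -(1 / 2))}
  else if d = 2 then
    {((1 : ℂ), (1 / 2 : ℝ)), (1, -(1 / 2)),
      (Complex.I, Real.sqrt 2 / 2), (Complex.I, -(Real.sqrt 2 / 2))}
  else {p : ℂ × ℝ | ∃ k : ℕ, k < 6 ∧ p = (omegaD 3 ^ k, (1 / 2 : ℝ))}

lemma omega1 : omegaD 1 = Complex.I := by simp [omegaD]
lemma sqC {r : ℝ} {n : ℕ} (h : r = Real.sqrt n) : ((r : ℝ) : ℂ) ^ 2 = (n : ℂ) := by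
  rw [h, ← Complex.ofReal_pow, Real.sq_sqrt (by positivity : (0:ℝ) ≤ (n:ℝ))]
  norm_num
lemma omega1_sq : omegaD 1 ^ 2 = -1 := by rw [omega1, Complex.I_sq]
lemma omega2_sq : omegaD 2 ^ 2 = -2 := by
  have h : ((Real.sqrt 2 : ℝ) : ℂ) ^ 2 = ((2:ℕ) : ℂ) := sqC (by norm_num)
  push_cast at h
  simp only [omegaD]; norm_num
  linear_combination Complex.I ^ 2 * h + 2 * Complex.I_sq
lemma omega3_sq : omegaD 3 ^ 2 = -1 + omegaD 3 := by
  have h : ((Real.sqrt 3 : ℝ) : ℂ) ^ 2 = ((3:ℕ) : ℂ) := sqC (by norm_num)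
  push_cast at h
  simp only [omegaD]; norm_num
  linear_combination Complex.I ^ 2 / 4 * h + 3 / 4 * Complex.I_sq
lemma omega3_conj : (starRingEnd ℂ) (omegaD 3) = 1 - omegaD 3 := by
  simp only [omegaD]
  norm_num [map_div₀, Complex.conj_I, map_ofNat]
  ring
lemma omega12_conj (d : ℕ) (h : d % 4 ≠ 3) : (starRingEnd ℂ) (omegaD d) = -omegaD d := by
  simp [omegaD, h, Complex.conj_I]

lemma ri_intCast (d : ℕ) (n : ℤ) : (n : ℂ) ∈ ringInt d := ⟨n, 0, by push_cast; ring⟩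
lemma ri_omega (d : ℕ) : omegaD d ∈ ringInt d := ⟨0, 1, by push_cast; ring⟩
lemma ri_add {d : ℕ} {x y : ℂ} (hx : x ∈ ringInt d) (hy : y ∈ ringInt d) :
    x + y ∈ ringInt d := by
  obtain ⟨a, b, rfl⟩ := hx; obtain ⟨a', b', rfl⟩ := hy
  exact ⟨a + a', b + b', by push_cast; ring⟩
lemma ri_neg {d : ℕ} {x : ℂ} (hx : x ∈ ringInt d) : -x ∈ ringInt d := by
  obtain ⟨a, b, rfl⟩ := hx; exact ⟨-a, -b, by push_cast; ring⟩
lemma ri_sub {d : ℕ} {x y : ℂ} (hx : x ∈ ringInt d) (hy : y ∈ ringInt d) :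
    x - y ∈ ringInt d := by
  simpa [sub_eq_add_neg] using ri_add hx (ri_neg hy)

lemma omega_facts (d : ℕ) (hd : d ∈ ({1, 2, 3} : Set ℕ)) :
    ∃ A B C D : ℤ, omegaD d ^ 2 = (A : ℂ) + (B : ℂ) * omegaD d ∧
      (starRingEnd ℂ) (omegaD d) = (C : ℂ) + (D : ℂ) * omegaD d := by
  rcases hd with rfl | rfl | rfl
  · exact ⟨-1, 0, 0, -1, by push_cast; rw [omega1_sq]; ring,
      by push_cast; rw [omega12_conj 1 (by norm_num)]; ring⟩
  · exact ⟨-2, 0, 0, -1, by push_cast; rw [omega2_sq]; ring,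
      by push_cast; rw [omega12_conj 2 (by norm_num)]; ring⟩
  · exact ⟨-1, 1, 1, -1, by push_cast; rw [omega3_sq]; ring,
      by push_cast; rw [omega3_conj]; ring⟩

lemma ri_mul {d : ℕ} (hd : d ∈ ({1, 2, 3} : Set ℕ)) {x y : ℂ}
    (hx : x ∈ ringInt d) (hy : y ∈ ringInt d) : x * y ∈ ringInt d := by
  obtain ⟨A, B, C, D, hA, _⟩ := omega_facts d hd
  obtain ⟨a, b, rfl⟩ := hx; obtain ⟨a', b', rfl⟩ := hy
  refine ⟨a * a' + A * b * b', a * b' + a' * b + B * b * b', ?_⟩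
  push_cast
  linear_combination (b : ℂ) * (b' : ℂ) * hA

lemma ri_conj {d : ℕ} (hd : d ∈ ({1, 2, 3} : Set ℕ)) {x : ℂ}
    (hx : x ∈ ringInt d) : (starRingEnd ℂ) x ∈ ringInt d := by
  obtain ⟨A, B, C, D, _, hC⟩ := omega_facts d hd
  obtain ⟨a, b, rfl⟩ := hx
  refine ⟨a + b * C, b * D, ?_⟩
  push_cast [map_add, map_mul, map_intCast]
  linear_combination (b : ℂ) * hC

lemma ri_pow {d : ℕ} (hd : d ∈ ({1, 2, 3} : Set ℕ)) {x : ℂ}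
    (hx : x ∈ ringInt d) (n : ℕ) : x ^ n ∈ ringInt d := by
  induction n with
  | zero => exact ⟨1, 0, by push_cast; ring⟩
  | succ n ih => rw [pow_succ]; exact ri_mul hd ih hx

lemma omega_im_ne (d : ℕ) (hd : d ∈ ({1, 2, 3} : Set ℕ)) : (omegaD d).im ≠ 0 := by
  rcases hd with rfl | rfl | rfl
  · simp [omega1]
  · simp [omegaD]
  · simp only [omegaD]
    norm_num [Complex.div_im]

lemma normSq_int (d : ℕ) (hd : d ∈ ({1, 2, 3} : Set ℕ)) {x : ℂ}
    (hx : x ∈ ringInt d) : ∃ n : ℤ, (n : ℝ) = Complex.normSq x := by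
  obtain ⟨m, n, hmn⟩ := ri_mul hd hx (ri_conj hd hx)
  rw [Complex.mul_conj] at hmn
  have him := congrArg Complex.im hmn
  simp [Complex.add_im, Complex.mul_im] at him
  rcases him with h | h
  · refine ⟨m, ?_⟩
    have hre := congrArg Complex.re hmn
    simp [h] at hre
    exact hre.symm
  · exact absurd h (omega_im_ne d hd)

lemma one_le_abs_ri (d : ℕ) (hd : d ∈ ({1, 2, 3} : Set ℕ)) {x : ℂ}
    (hx : x ∈ ringInt d) (h0 : x ≠ 0) : 1 ≤ ‖x‖ := by
  obtain ⟨n, hn⟩ := normSq_int d hd hx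
  have hpos : 0 < Complex.normSq x := Complex.normSq_pos.mpr h0
  have hn0 : 0 < n := by exact_mod_cast hn ▸ hpos
  have hn1 : (1 : ℝ) ≤ n := by exact_mod_cast hn0
  have h1 : (1 : ℝ) ≤ Complex.normSq x := le_of_le_of_eq hn1 hn
  have := Complex.sq_norm x
  nlinarith [norm_nonneg x]

lemma denom_abs (d : ℕ) (hd : d ∈ ({1, 2, 3} : Set ℕ)) {P Q P' Q' : ℂ}
    (hP : P ∈ ringInt d) (hQ : Q ∈ ringInt d) (hP' : P' ∈ ringInt d) (hQ' : Q' ∈ ringInt d)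
    (hQ0 : Q ≠ 0) (hQ'0 : Q' ≠ 0)
    (hc : CoprimeIn d P Q) (hc' : CoprimeIn d P' Q')
    (heq : P / Q = P' / Q') : ‖Q‖ = ‖Q'‖ := by
  obtain ⟨u₁, v₁, hu₁, hv₁, h₁⟩ := hc
  obtain ⟨u₂, v₂, hu₂, hv₂, h₂⟩ := hc'
  have hcross : P * Q' = P' * Q := by
    field_simp at heq; linear_combination heq
  have hw₁ : Q' = Q * (u₁ * P' + v₁ * Q') := by
    have h := congrArg (· * Q') h₁
    simp only [add_mul, one_mul] at h
    linear_combination u₁ * hcross - h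
  have hw₂ : Q = Q' * (u₂ * P + v₂ * Q) := by
    have h := congrArg (· * Q) h₂
    simp only [add_mul, one_mul] at h
    linear_combination -h - u₂ * hcross
  set w₁ := u₁ * P' + v₁ * Q' with hw₁def
  set w₂ := u₂ * P + v₂ * Q with hw₂def
  have hww : w₁ * w₂ = 1 := by
    have h : Q * (w₁ * w₂) = Q * 1 := by linear_combination -hw₂ - w₂ * hw₁
    exact mul_left_cancel₀ hQ0 h
  have hw₁0 : w₁ ≠ 0 := fun h => hQ'0 (by rw [hw₁, h, mul_zero])
  have hw₂0 : w₂ ≠ 0 := fun h => hQ0 (by rw [hw₂, h, mul_zero])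
  have a₁ : 1 ≤ ‖w₁‖ :=
    one_le_abs_ri d hd (ri_add (ri_mul hd hu₁ hP') (ri_mul hd hv₁ hQ')) hw₁0
  have a₂ : 1 ≤ ‖w₂‖ :=
    one_le_abs_ri d hd (ri_add (ri_mul hd hu₂ hP) (ri_mul hd hv₂ hQ)) hw₂0
  have habs : ‖w₁‖ * ‖w₂‖ = 1 := by
    rw [← norm_mul, hww, norm_one]
  have h1 : ‖w₁‖ = 1 := by nlinarith
  rw [hw₁, norm_mul, h1, mul_one]


lemma h3mem : (3 : ℕ) ∈ ({1, 2, 3} : Set ℕ) := by simp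

lemma line_facts (d : ℕ) (hd : d ∈ ({1, 2, 3} : Set ℕ)) (u : ℂ) (c : ℝ)
    (hL : (u, c) ∈ boundaryLineParams d) :
    (2 * (c : ℂ) * u) ∈ ringInt d ∧ (-(u ^ 2)) ∈ ringInt d ∧
      ∃ e' : ℂ, e' ∈ ringInt d ∧ (-(u ^ 2)) * e' = 1 := by
  rcases hd with rfl | rfl | rfl
  · simp only [boundaryLineParams, if_pos rfl, Set.mem_insert_iff, Set.mem_singleton_iff,
      Prod.mk.injEq] at hL
    rcases hL with ⟨rfl, rfl⟩ | ⟨rfl, rfl⟩ | ⟨rfl, rfl⟩ | ⟨rfl, rfl⟩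
    · exact ⟨⟨1, 0, by norm_num⟩, ⟨-1, 0, by norm_num⟩, ((-1 : ℤ) : ℂ), ri_intCast 1 (-1),
        by norm_num⟩
    · exact ⟨⟨-1, 0, by norm_num⟩, ⟨-1, 0, by norm_num⟩, ((-1 : ℤ) : ℂ), ri_intCast 1 (-1),
        by norm_num⟩
    · exact ⟨⟨0, 1, by rw [omega1]; norm_num⟩, ⟨1, 0, by simp [Complex.I_sq]⟩, 1,
        ⟨1, 0, by norm_num⟩, by simp [Complex.I_sq]⟩
    · exact ⟨⟨0, -1, by rw [omega1]; push_cast; ring_nf⟩,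
        ⟨1, 0, by simp [Complex.I_sq]⟩, 1, ⟨1, 0, by norm_num⟩, by simp [Complex.I_sq]⟩
  · have hω : omegaD 2 = Complex.I * Real.sqrt 2 := by simp [omegaD]
    simp only [boundaryLineParams, if_neg (by norm_num : (2:ℕ) ≠ 1), if_pos rfl,
      Set.mem_insert_iff, Set.mem_singleton_iff, Prod.mk.injEq] at hL
    rcases hL with ⟨rfl, rfl⟩ | ⟨rfl, rfl⟩ | ⟨rfl, rfl⟩ | ⟨rfl, rfl⟩
    · exact ⟨⟨1, 0, by norm_num⟩, ⟨-1, 0, by norm_num⟩, ((-1 : ℤ) : ℂ), ri_intCast 2 (-1),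
        by norm_num⟩
    · exact ⟨⟨-1, 0, by norm_num⟩, ⟨-1, 0, by norm_num⟩, ((-1 : ℤ) : ℂ), ri_intCast 2 (-1),
        by norm_num⟩
    · exact ⟨⟨0, 1, by rw [hω]; push_cast; ring⟩, ⟨1, 0, by simp [Complex.I_sq]⟩, 1,
        ⟨1, 0, by norm_num⟩, by simp [Complex.I_sq]⟩
    · exact ⟨⟨0, -1, by rw [hω]; push_cast; ring⟩, ⟨1, 0, by simp [Complex.I_sq]⟩, 1,
        ⟨1, 0, by norm_num⟩, by simp [Complex.I_sq]⟩
  · simp only [boundaryLineParams, if_neg (by norm_num : (3:ℕ) ≠ 1),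
      if_neg (by norm_num : (3:ℕ) ≠ 2), Set.mem_setOf_eq, Prod.mk.injEq] at hL
    obtain ⟨k, -, rfl, rfl⟩ := hL
    have hu : omegaD 3 ^ k ∈ ringInt 3 := ri_pow h3mem (ri_omega 3) k
    have hcu : (starRingEnd ℂ) (omegaD 3) ∈ ringInt 3 := ri_conj h3mem (ri_omega 3)
    have hω1 : omegaD 3 * (starRingEnd ℂ) (omegaD 3) = 1 := by
      rw [omega3_conj]; linear_combination -omega3_sq
    refine ⟨?_, ri_neg (ri_pow h3mem hu 2), -(((starRingEnd ℂ) (omegaD 3)) ^ k) ^ 2,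
      ri_neg (ri_pow h3mem (ri_pow h3mem hcu k) 2), ?_⟩
    · have ht : 2 * ((1/2 : ℝ) : ℂ) * (omegaD 3 ^ k) = omegaD 3 ^ k := by push_cast; ring
      rw [ht]; exact hu
    · have : omegaD 3 ^ k * ((starRingEnd ℂ) (omegaD 3)) ^ k = 1 := by
        rw [← mul_pow, hω1, one_pow]
      calc -(omegaD 3 ^ k) ^ 2 * -(((starRingEnd ℂ) (omegaD 3)) ^ k) ^ 2
          = (omegaD 3 ^ k * ((starRingEnd ℂ) (omegaD 3)) ^ k) ^ 2 := by ring
        _ = 1 := by rw [this]; norm_num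


/-- Let `d ∈ {1,2,3}` and let `L = {z : Re(conj(u)z) = c}` be
a line containing a side of `∂U_d`. For `z ∈ ℚ(√(-d))`, the reflection
`ẑ = 2cu − u²·conj(z)` of `z` across `L` again lies in `ℚ(√(-d))`, and if
`z = P/Q`, `ẑ = P'/Q'` in coprime lowest terms then `|Q'| = |Q|` (so the Ford
spheres of `z` and `ẑ` have the same radius). -/
theorem reflection_preserves_field_and_denominator (d : ℕ) (hd : d ∈ ({1, 2, 3} : Set ℕ))
    (u : ℂ) (c : ℝ) (hL : (u, c) ∈ boundaryLineParams d)
    (z : ℂ) (hz : inK d z) :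
    inK d (2 * (c : ℂ) * u - u ^ 2 * (starRingEnd ℂ) z) ∧
    ∀ P Q P' Q' : ℂ, P ∈ ringInt d → Q ∈ ringInt d → Q ≠ 0 → CoprimeIn d P Q →
      z = P / Q →
      P' ∈ ringInt d → Q' ∈ ringInt d → Q' ≠ 0 → CoprimeIn d P' Q' →
      2 * (c : ℂ) * u - u ^ 2 * (starRingEnd ℂ) z = P' / Q' →
      ‖Q'‖ = ‖Q‖ := by
  obtain ⟨ht, he, e', he', hee⟩ := line_facts d hd u c hL
  constructor
  · obtain ⟨p, q, hp, hq, hq0, rfl⟩ := hz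
    refine ⟨2 * (c : ℂ) * u * (starRingEnd ℂ) q + -(u ^ 2) * (starRingEnd ℂ) p,
      (starRingEnd ℂ) q, ri_add (ri_mul hd ht (ri_conj hd hq)) (ri_mul hd he (ri_conj hd hp)),
      ri_conj hd hq, ?_, ?_⟩
    · simpa using hq0
    · rw [map_div₀]
      have hq0' : (starRingEnd ℂ) q ≠ 0 := by simpa using hq0
      field_simp
      ring
  · intro P Q P' Q' hP hQ hQ0 hcop hzPQ hP' hQ' hQ'0 hcop' hrefl
    have hQc0 : (starRingEnd ℂ) Q ≠ 0 := by simpa using hQ0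
    set P'' : ℂ := 2 * (c : ℂ) * u * (starRingEnd ℂ) Q + -(u ^ 2) * (starRingEnd ℂ) P with hP''
    have hP''mem : P'' ∈ ringInt d :=
      ri_add (ri_mul hd ht (ri_conj hd hQ)) (ri_mul hd he (ri_conj hd hP))
    have hval : P'' / (starRingEnd ℂ) Q = P' / Q' := by
      rw [← hrefl, hzPQ, map_div₀, hP'']
      field_simp
      ring
    have hcop'' : CoprimeIn d P'' ((starRingEnd ℂ) Q) := by
      obtain ⟨u₀, v₀, hu₀, hv₀, h1⟩ := hcop
      have h1' : (starRingEnd ℂ) u₀ * (starRingEnd ℂ) P +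
          (starRingEnd ℂ) v₀ * (starRingEnd ℂ) Q = 1 := by
        have := congrArg (starRingEnd ℂ) h1
        simpa [map_add, map_mul] using this
      refine ⟨(starRingEnd ℂ) u₀ * e',
        (starRingEnd ℂ) v₀ - (starRingEnd ℂ) u₀ * e' * (2 * (c : ℂ) * u),
        ri_mul hd (ri_conj hd hu₀) he', ri_sub (ri_conj hd hv₀)
          (ri_mul hd (ri_mul hd (ri_conj hd hu₀) he') ht), ?_⟩
      rw [hP'']
      linear_combination h1' + ((starRingEnd ℂ) u₀ * (starRingEnd ℂ) P) * hee
    have := denom_abs d hd hP''mem (ri_conj hd hQ) hP' hQ' hQc0 hQ'0 hcop'' hcop' hval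
    rw [← this, Complex.norm_conj]
end

section
/- Let d ∈ {2,3,11} and suppose z = [a₀; a₁, a₂, …] with all a_n ∈ ℤ[ω_d] is a geodesic continued fraction expansion (finite or infinite). Then for every n ≥ 1 for which the relevant partial quotients exist: if |a_n| = √3, a_{n+1} = −conj(a_n) and a_{n+2} = a_n, then a_{n+3} ≠ −conj(a_n). -/
/-- Numerators of the convergents of `[a₀; a₁, a₂, …]`:
`p₀ = a₀`, `p₁ = a₁a₀ + 1` (with `p₋₁ = 1`), `p_k = a_k p_{k−1} + p_{k−2}`. -/
noncomputable def cfP0 (a : ℕ → ℂ) : ℕ → ℂ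
  | 0 => a 0
  | 1 => a 1 * a 0 + 1
  | (k + 2) => a (k + 2) * cfP0 a (k + 1) + cfP0 a k

/-- Denominators of the convergents of `[a₀; a₁, a₂, …]`:
`q₀ = 1`, `q₁ = a₁` (with `q₋₁ = 0`), `q_k = a_k q_{k−1} + q_{k−2}`. -/
noncomputable def cfQ0 (a : ℕ → ℂ) : ℕ → ℂ
  | 0 => 1
  | 1 => a 1
  | (k + 2) => a (k + 2) * cfQ0 a (k + 1) + cfQ0 a k

/-- The walk `∞ → p₀/q₀ → p₁/q₁ → ⋯` along the convergents of `[a₀; a₁, …]`. -/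
noncomputable def cfWalk0 (a : ℕ → ℂ) : ℕ → OnePoint ℂ :=
  fun k => if k = 0 then OnePoint.infty else divC (cfP0 a (k - 1)) (cfQ0 a (k - 1))

/-- A unit of the ring `ℤ[ω_d]`. -/
def IsUnitIn (d : ℕ) (ζ : ℂ) : Prop := ζ ∈ ringInt d ∧ ∃ η ∈ ringInt d, ζ * η = 1

lemma omegaD_sq (d : ℕ) (hd : d ∈ ({2, 3, 11} : Set ℕ)) :
    ∃ e f : ℤ, omegaD d ^ 2 = (e : ℂ) + (f : ℂ) * omegaD d := by
  have hI := Complex.I_sq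
  rcases hd with rfl | rfl | rfl
  · refine ⟨-2, 0, ?_⟩
    have h2 : ((Real.sqrt 2 : ℝ) : ℂ) ^ 2 = 2 := by
      rw [← Complex.ofReal_pow, Real.sq_sqrt] <;> norm_num
    simp only [omegaD]; norm_num
    linear_combination ((Real.sqrt 2:ℝ):ℂ)^2 * hI - h2
  · refine ⟨-1, 1, ?_⟩
    have h2 : ((Real.sqrt 3 : ℝ) : ℂ) ^ 2 = 3 := by
      rw [← Complex.ofReal_pow, Real.sq_sqrt] <;> norm_num
    simp only [omegaD]; norm_num
    linear_combination (((Real.sqrt 3:ℝ):ℂ)^2/4) * hI - h2/4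
  · refine ⟨-3, 1, ?_⟩
    have h2 : ((Real.sqrt 11 : ℝ) : ℂ) ^ 2 = 11 := by
      rw [← Complex.ofReal_pow, Real.sq_sqrt] <;> norm_num
    simp only [omegaD]; norm_num
    linear_combination (((Real.sqrt 11:ℝ):ℂ)^2/4) * hI - h2/4

lemma ringInt_intCast (d : ℕ) (m : ℤ) : (m : ℂ) ∈ ringInt d := ⟨m, 0, by push_cast; ring⟩

lemma ringInt_one (d : ℕ) : (1 : ℂ) ∈ ringInt d := by exact_mod_cast ringInt_intCast d 1

lemma ringInt_neg_one (d : ℕ) : (-1 : ℂ) ∈ ringInt d := by exact_mod_cast ringInt_intCast d (-1)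

lemma ringInt_add (d : ℕ) {x y : ℂ} (hx : x ∈ ringInt d) (hy : y ∈ ringInt d) :
    x + y ∈ ringInt d := by
  obtain ⟨a, b, rfl⟩ := hx; obtain ⟨c, e, rfl⟩ := hy
  exact ⟨a + c, b + e, by push_cast; ring⟩

lemma ringInt_neg (d : ℕ) {x : ℂ} (hx : x ∈ ringInt d) : -x ∈ ringInt d := by
  obtain ⟨a, b, rfl⟩ := hx
  exact ⟨-a, -b, by push_cast; ring⟩

lemma ringInt_mul (d : ℕ) (hd : d ∈ ({2, 3, 11} : Set ℕ)) {x y : ℂ}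
    (hx : x ∈ ringInt d) (hy : y ∈ ringInt d) : x * y ∈ ringInt d := by
  obtain ⟨e, f, hsq⟩ := omegaD_sq d hd
  obtain ⟨a, b, rfl⟩ := hx; obtain ⟨c, g, rfl⟩ := hy
  refine ⟨a * c + b * g * e, a * g + b * c + b * g * f, ?_⟩
  push_cast
  linear_combination ((b : ℂ) * (g : ℂ)) * hsq


/-- Shifted numerators: `prC a (k+1) = cfP0 a k`, with `prC a 0 = 1` (the value `p₋₁`). -/
noncomputable def prC (a : ℕ → ℂ) : ℕ → ℂ
  | 0 => 1
  | 1 => a 0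
  | (k + 2) => a (k + 1) * prC a (k + 1) + prC a k

/-- Shifted denominators: `qrC a (k+1) = cfQ0 a k`, with `qrC a 0 = 0`. -/
noncomputable def qrC (a : ℕ → ℂ) : ℕ → ℂ
  | 0 => 0
  | 1 => 1
  | (k + 2) => a (k + 1) * qrC a (k + 1) + qrC a k

lemma prC_eq (a : ℕ → ℂ) : ∀ k, prC a (k + 1) = cfP0 a k := by
  intro k
  induction k using Nat.strong_induction_on with
  | _ k ih =>
    match k with
    | 0 => simp [prC, cfP0]
    | 1 => simp [prC, cfP0]
    | (k + 2) =>
      show a (k + 2) * prC a (k + 2) + prC a (k + 1) = _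
      rw [ih (k + 1) (by omega), ih k (by omega)]
      rfl

lemma qrC_eq (a : ℕ → ℂ) : ∀ k, qrC a (k + 1) = cfQ0 a k := by
  intro k
  induction k using Nat.strong_induction_on with
  | _ k ih =>
    match k with
    | 0 => simp [qrC, cfQ0]
    | 1 => simp [qrC, cfQ0]
    | (k + 2) =>
      show a (k + 2) * qrC a (k + 2) + qrC a (k + 1) = _
      rw [ih (k + 1) (by omega), ih k (by omega)]
      rfl

lemma cfWalk0_eq (a : ℕ → ℂ) : ∀ k, cfWalk0 a k = divC (prC a k) (qrC a k) := by
  intro k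
  match k with
  | 0 => simp [cfWalk0, divC, prC, qrC]
  | (k + 1) =>
    simp only [cfWalk0, Nat.add_sub_cancel, if_neg (Nat.succ_ne_zero k)]
    rw [prC_eq, qrC_eq]

lemma detD (a : ℕ → ℂ) : ∀ k, prC a (k + 1) * qrC a k - prC a k * qrC a (k + 1)
    = -(-1 : ℂ) ^ k := by
  intro k
  induction k with
  | zero => simp [prC, qrC]
  | succ k ih =>
    show (a (k + 1) * prC a (k + 1) + prC a k) * qrC a (k + 1)
        - prC a (k + 1) * (a (k + 1) * qrC a (k + 1) + qrC a k) = -(-1 : ℂ) ^ (k + 1)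
    linear_combination (-1 : ℂ) * ih

lemma prC_mem (d : ℕ) (hd : d ∈ ({2, 3, 11} : Set ℕ)) (a : ℕ → ℂ) (k : ℕ)
    (ha : ∀ j, j < k → a j ∈ ringInt d) : prC a k ∈ ringInt d := by
  induction k using Nat.strong_induction_on with
  | _ k ih =>
    match k with
    | 0 => exact ringInt_one d
    | 1 => exact ha 0 (by omega)
    | (k + 2) =>
      refine ringInt_add d (ringInt_mul d hd (ha (k + 1) (by omega)) ?_) ?_
      · exact ih (k + 1) (by omega) (fun j hj => ha j (by omega))
      · exact ih k (by omega) (fun j hj => ha j (by omega))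

lemma qrC_mem (d : ℕ) (hd : d ∈ ({2, 3, 11} : Set ℕ)) (a : ℕ → ℂ) (k : ℕ)
    (ha : ∀ j, j < k → a j ∈ ringInt d) : qrC a k ∈ ringInt d := by
  induction k using Nat.strong_induction_on with
  | _ k ih =>
    match k with
    | 0 => exact ⟨0, 0, by simp [qrC]⟩
    | 1 => exact ringInt_one d
    | (k + 2) =>
      refine ringInt_add d (ringInt_mul d hd (ha (k + 1) (by omega)) ?_) ?_
      · exact ih (k + 1) (by omega) (fun j hj => ha j (by omega))
      · exact ih k (by omega) (fun j hj => ha j (by omega))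

lemma fareyAdj_of_det (d : ℕ) (hd : d ∈ ({2, 3, 11} : Set ℕ)) {p q p' q' D : ℂ}
    (hp : p ∈ ringInt d) (hq : q ∈ ringInt d) (hp' : p' ∈ ringInt d) (hq' : q' ∈ ringInt d)
    (hD : p * q' - p' * q = D) (hD1 : D = 1 ∨ D = -1) :
    FareyAdj d (divC p q) (divC p' q') := by
  have hDmem : D ∈ ringInt d := by
    rcases hD1 with rfl | rfl
    exacts [ringInt_one d, ringInt_neg_one d]
  have hD2 : D * D = 1 := by rcases hD1 with rfl | rfl <;> norm_num
  refine ⟨p, q, p', q', hp, hq, hp', hq', ?_, ?_, rfl, rfl, ?_⟩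
  · exact ⟨D * q', -(D * p'), ringInt_mul d hd hDmem hq',
      ringInt_neg d (ringInt_mul d hd hDmem hp'), by linear_combination D * hD + hD2⟩
  · exact ⟨-(D * q), D * p, ringInt_neg d (ringInt_mul d hd hDmem hq),
      ringInt_mul d hd hDmem hp, by linear_combination D * hD + hD2⟩
  · rw [hD]
    rcases hD1 with rfl | rfl <;> simp

/-- The shortcut walk used in the proof. -/
noncomputable def gW (a : ℕ → ℂ) (m : ℕ) (ν : ℂ) : ℕ → OnePoint ℂ := fun k =>
  if k ≤ m + 1 then cfWalk0 a k
  else if k = m + 2 then divC (prC a m) (qrC a m)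
  else if k = m + 3 then divC (prC a (m + 1) + ν * prC a m) (qrC a (m + 1) + ν * qrC a m)
  else cfWalk0 a (m + 5)


/-- Let `d ∈ {2,3,11}` and let `[a₀; a₁, …, a_N]` with all
`a_k ∈ ℤ[ω_d]` be a geodesic continued fraction expansion. Then for every
`n ≥ 1` for which the relevant partial quotients exist: if `|a_n| = √3`,
`a_{n+1} = −conj(a_n)` and `a_{n+2} = a_n`, then `a_{n+3} ≠ −conj(a_n)`. -/
theorem geodesic_expansion_sqrt3_restriction (d : ℕ) (hd : d ∈ ({2, 3, 11} : Set ℕ))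
    (N : ℕ) (a : ℕ → ℂ) (ha : ∀ k ≤ N, a k ∈ ringInt d)
    (hgeo : ∀ n ≤ N, IsGeodesicWalk d (n + 1) (cfWalk0 a)) :
    ∀ n, 1 ≤ n → n + 3 ≤ N →
      ‖a n‖ = Real.sqrt 3 →
      a (n + 1) = -(starRingEnd ℂ) (a n) →
      a (n + 2) = a n →
      a (n + 3) ≠ -(starRingEnd ℂ) (a n) := by
  intro n hn hN habs h1 h2 hcon
  obtain ⟨m, rfl⟩ : ∃ m, n = m + 1 := ⟨n - 1, by omega⟩
  -- re-index the hypotheses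
  have h1' : a (m + 2) = -(starRingEnd ℂ) (a (m + 1)) := h1
  have h2' : a (m + 3) = a (m + 1) := h2
  have hcon' : a (m + 4) = -(starRingEnd ℂ) (a (m + 1)) := hcon
  have hc' : a (m + 4) = a (m + 2) := by rw [hcon', h1']
  have hN' : m + 4 ≤ N := by omega
  -- the key numeric identity  α β = -3
  have hαβ : a (m + 1) * a (m + 2) = -3 := by
    rw [h1', mul_neg, Complex.mul_conj, ← Complex.sq_norm, habs,
      Real.sq_sqrt (by norm_num : (0:ℝ) ≤ 3)]
    norm_num
  -- unfoldings of the recurrences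
  have eP2 : prC a (m + 2) = a (m + 1) * prC a (m + 1) + prC a m := rfl
  have eP3 : prC a (m + 3) = a (m + 2) * prC a (m + 2) + prC a (m + 1) := rfl
  have eP4 : prC a (m + 4) = a (m + 3) * prC a (m + 3) + prC a (m + 2) := rfl
  have eP5 : prC a (m + 5) = a (m + 4) * prC a (m + 4) + prC a (m + 3) := rfl
  have eQ2 : qrC a (m + 2) = a (m + 1) * qrC a (m + 1) + qrC a m := rfl
  have eQ3 : qrC a (m + 3) = a (m + 2) * qrC a (m + 2) + qrC a (m + 1) := rfl
  have eQ4 : qrC a (m + 4) = a (m + 3) * qrC a (m + 3) + qrC a (m + 2) := rfl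
  have eQ5 : qrC a (m + 5) = a (m + 4) * qrC a (m + 4) + qrC a (m + 3) := rfl
  have hP4 : prC a (m + 5) = prC a (m + 1) - a (m + 2) * prC a m := by
    rw [eP5, eP4, eP3, eP2, h2', hc']
    linear_combination (a (m + 1) * a (m + 2) * prC a (m + 1) + a (m + 2) * prC a m) * hαβ
  have hQ4 : qrC a (m + 5) = qrC a (m + 1) - a (m + 2) * qrC a m := by
    rw [eQ5, eQ4, eQ3, eQ2, h2', hc']
    linear_combination (a (m + 1) * a (m + 2) * qrC a (m + 1) + a (m + 2) * qrC a m) * hαβ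
  -- ring memberships
  have haM : ∀ j, j ≤ m + 4 → a j ∈ ringInt d := fun j hj => ha j (by omega)
  have hpm : prC a m ∈ ringInt d := prC_mem d hd a m (fun j hj => haM j (by omega))
  have hpm1 : prC a (m + 1) ∈ ringInt d := prC_mem d hd a (m + 1) (fun j hj => haM j (by omega))
  have hqm : qrC a m ∈ ringInt d := qrC_mem d hd a m (fun j hj => haM j (by omega))
  have hqm1 : qrC a (m + 1) ∈ ringInt d := qrC_mem d hd a (m + 1) (fun j hj => haM j (by omega))
  have hν : -(a (m + 2)) - 1 ∈ ringInt d := by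
    rw [sub_eq_add_neg]
    exact ringInt_add d (ringInt_neg d (haM (m + 2) (by omega))) (ringInt_neg_one d)
  have hp3 : prC a (m + 1) + (-(a (m + 2)) - 1) * prC a m ∈ ringInt d :=
    ringInt_add d hpm1 (ringInt_mul d hd hν hpm)
  have hq3 : qrC a (m + 1) + (-(a (m + 2)) - 1) * qrC a m ∈ ringInt d :=
    ringInt_add d hqm1 (ringInt_mul d hd hν hqm)
  have hp4 : prC a (m + 1) - a (m + 2) * prC a m ∈ ringInt d := by
    rw [sub_eq_add_neg]
    exact ringInt_add d hpm1 (ringInt_neg d (ringInt_mul d hd (haM (m + 2) (by omega)) hpm))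
  have hq4 : qrC a (m + 1) - a (m + 2) * qrC a m ∈ ringInt d := by
    rw [sub_eq_add_neg]
    exact ringInt_add d hqm1 (ringInt_neg d (ringInt_mul d hd (haM (m + 2) (by omega)) hqm))
  -- determinant facts
  have hdet := detD a m
  have hDneg : (-(-1 : ℂ) ^ m) = 1 ∨ (-(-1 : ℂ) ^ m) = -1 := by
    rcases Nat.even_or_odd m with h | h
    · right; rw [h.neg_one_pow]
    · left; rw [h.neg_one_pow]; norm_num
  have hDpos : ((-1 : ℂ) ^ m) = 1 ∨ ((-1 : ℂ) ^ m) = -1 := by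
    rcases Nat.even_or_odd m with h | h
    · left; exact h.neg_one_pow
    · right; exact h.neg_one_pow
  -- the three new edges
  have E1 : FareyAdj d (divC (prC a (m + 1)) (qrC a (m + 1))) (divC (prC a m) (qrC a m)) :=
    fareyAdj_of_det d hd hpm1 hqm1 hpm hqm hdet hDneg
  have E2 : FareyAdj d (divC (prC a m) (qrC a m))
      (divC (prC a (m + 1) + (-(a (m + 2)) - 1) * prC a m)
            (qrC a (m + 1) + (-(a (m + 2)) - 1) * qrC a m)) := by
    refine fareyAdj_of_det d hd hpm hqm hp3 hq3 ?_ hDpos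
    linear_combination (-1 : ℂ) * hdet
  have E3 : FareyAdj d
      (divC (prC a (m + 1) + (-(a (m + 2)) - 1) * prC a m)
            (qrC a (m + 1) + (-(a (m + 2)) - 1) * qrC a m))
      (divC (prC a (m + 1) - a (m + 2) * prC a m)
            (qrC a (m + 1) - a (m + 2) * qrC a m)) := by
    refine fareyAdj_of_det d hd hp3 hq3 hp4 hq4 ?_ hDneg
    linear_combination hdet
  -- assemble the short walk
  have H := hgeo (m + 4) hN'
  have hwalk : IsWalk d (m + 4) (gW a m (-(a (m + 2)) - 1)) := by
    intro k hk
    by_cases hk1 : k < m + 1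
    · have e1 : gW a m (-(a (m + 2)) - 1) k = cfWalk0 a k := by
        simp only [gW]; rw [if_pos (show k ≤ m + 1 by omega)]
      have e2 : gW a m (-(a (m + 2)) - 1) (k + 1) = cfWalk0 a (k + 1) := by
        simp only [gW]; rw [if_pos (show k + 1 ≤ m + 1 by omega)]
      rw [e1, e2]
      exact H.1 k (by omega)
    · have hk3 : k = m + 1 ∨ k = m + 2 ∨ k = m + 3 := by omega
      rcases hk3 with rfl | rfl | rfl
      · have e1 : gW a m (-(a (m + 2)) - 1) (m + 1) = cfWalk0 a (m + 1) := by
          simp only [gW]; rw [if_pos (show m + 1 ≤ m + 1 by omega)]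
        have e2 : gW a m (-(a (m + 2)) - 1) (m + 1 + 1) = divC (prC a m) (qrC a m) := by
          simp only [gW]; rw [if_neg (show ¬ (m + 1 + 1 ≤ m + 1) by omega)]
          exact if_pos trivial
        rw [e1, e2, cfWalk0_eq]
        exact E1
      · have e1 : gW a m (-(a (m + 2)) - 1) (m + 2) = divC (prC a m) (qrC a m) := by
          simp only [gW]; rw [if_neg (show ¬ (m + 2 ≤ m + 1) by omega)]
          exact if_pos trivial
        have e2 : gW a m (-(a (m + 2)) - 1) (m + 2 + 1) =
            divC (prC a (m + 1) + (-(a (m + 2)) - 1) * prC a m)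
                 (qrC a (m + 1) + (-(a (m + 2)) - 1) * qrC a m) := by
          simp only [gW]
          rw [if_neg (show ¬ (m + 2 + 1 ≤ m + 1) by omega),
            if_neg (show ¬ (m + 2 + 1 = m + 2) by omega)]
          exact if_pos trivial
        rw [e1, e2]
        exact E2
      · have e1 : gW a m (-(a (m + 2)) - 1) (m + 3) =
            divC (prC a (m + 1) + (-(a (m + 2)) - 1) * prC a m)
                 (qrC a (m + 1) + (-(a (m + 2)) - 1) * qrC a m) := by
          simp only [gW]
          rw [if_neg (show ¬ (m + 3 ≤ m + 1) by omega),
            if_neg (show ¬ (m + 3 = m + 2) by omega)]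
          exact if_pos trivial
        have e2 : gW a m (-(a (m + 2)) - 1) (m + 3 + 1) = cfWalk0 a (m + 5) := by
          simp only [gW]
          rw [if_neg (show ¬ (m + 3 + 1 ≤ m + 1) by omega), if_neg (show ¬ (m + 3 + 1 = m + 2) by omega), if_neg (show ¬ (m + 3 + 1 = m + 3) by omega)]
        rw [e1, e2, cfWalk0_eq, hP4, hQ4]
        exact E3
  have hg0 : gW a m (-(a (m + 2)) - 1) 0 = cfWalk0 a 0 := by
    simp only [gW]; rw [if_pos (show 0 ≤ m + 1 by omega)]
  have hgend : gW a m (-(a (m + 2)) - 1) (m + 4) = cfWalk0 a (m + 4 + 1) := by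
    simp only [gW]
    rw [if_neg (show ¬ (m + 4 ≤ m + 1) by omega), if_neg (show ¬ (m + 4 = m + 2) by omega), if_neg (show ¬ (m + 4 = m + 3) by omega)]
  have := H.2 (m + 4) (gW a m (-(a (m + 2)) - 1)) hwalk hg0 hgend
  omega
end

section
/- Let d ∈ {1,2,3,7,11} and a₁,…,a_n ∈ ℤ[ω_d]. If R = [a₁,…,a_n] is a geodesic continued fraction expansion — i.e., the walk ∞ → 0 → [a₁] → [a₁,a₂] → ⋯ → [a₁,…,a_n] along its convergents is a geodesic path in the Farey graph E_d — then the reversed expansion R* = [a_n, a_{n−1}, …, a₁] is also a geodesic continued fraction expansion. -/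
namespace RevAux

/-! ### `ringInt d` is a subring of `ℂ` -/

lemma sqrtd_sq (d : ℕ) : (Real.sqrt d : ℂ) * (Real.sqrt d : ℂ) = (d : ℂ) := by
  norm_cast
  rw [Real.mul_self_sqrt (Nat.cast_nonneg d)]

lemma omega_mul (d : ℕ) :
    ∃ r s : ℤ, omegaD d * omegaD d = (r : ℂ) + (s : ℂ) * omegaD d := by
  have hs := sqrtd_sq d
  unfold omegaD
  split_ifs with h
  · obtain ⟨k, hk⟩ : (4 : ℕ) ∣ d + 1 := by omega
    refine ⟨-(k : ℤ), 1, ?_⟩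
    have hk' : (d : ℂ) + 1 = 4 * (k : ℂ) := by exact_mod_cast congrArg (Nat.cast : ℕ → ℂ) hk
    push_cast
    linear_combination (-1/4 : ℂ) * hs +
      ((Real.sqrt d : ℂ) * (Real.sqrt d) / 4) * Complex.I_mul_I - (1/4 : ℂ) * hk'
  · refine ⟨-(d : ℤ), 0, ?_⟩
    push_cast
    linear_combination ((Real.sqrt d : ℂ) * (Real.sqrt d)) * Complex.I_mul_I - hs

lemma zero_mem (d : ℕ) : (0 : ℂ) ∈ ringInt d := ⟨0, 0, by norm_num⟩

lemma one_mem (d : ℕ) : (1 : ℂ) ∈ ringInt d := ⟨1, 0, by norm_num⟩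

lemma neg_one_mem (d : ℕ) : (-1 : ℂ) ∈ ringInt d := ⟨-1, 0, by norm_num⟩

lemma add_mem {d : ℕ} {x y : ℂ} (hx : x ∈ ringInt d) (hy : y ∈ ringInt d) :
    x + y ∈ ringInt d := by
  obtain ⟨a, b, rfl⟩ := hx; obtain ⟨c, e, rfl⟩ := hy
  exact ⟨a + c, b + e, by push_cast; ring⟩

lemma neg_mem {d : ℕ} {x : ℂ} (hx : x ∈ ringInt d) : -x ∈ ringInt d := by
  obtain ⟨a, b, rfl⟩ := hx
  exact ⟨-a, -b, by push_cast; ring⟩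

lemma mul_mem {d : ℕ} {x y : ℂ} (hx : x ∈ ringInt d) (hy : y ∈ ringInt d) :
    x * y ∈ ringInt d := by
  obtain ⟨a, b, rfl⟩ := hx; obtain ⟨c, e, rfl⟩ := hy
  obtain ⟨r, s, hrs⟩ := omega_mul d
  refine ⟨a * c + b * e * r, a * e + b * c + b * e * s, ?_⟩
  push_cast
  linear_combination ((b : ℂ) * (e : ℂ)) * hrs

lemma neg_one_pow_mem (d k : ℕ) : ((-1 : ℂ)) ^ k ∈ ringInt d := by
  rcases neg_one_pow_eq_or ℂ k with h | h <;> rw [h]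
  · exact one_mem d
  · exact neg_one_mem d

/-! ### `divC` and the Möbius action -/

lemma divC_smul {c : ℂ} (hc : c ≠ 0) (p q : ℂ) : divC (c * p) (c * q) = divC p q := by
  unfold divC
  by_cases hq : q = 0
  · simp [hq]
  · have h1 : c * q ≠ 0 := mul_ne_zero hc hq
    rw [if_neg h1, if_neg hq, mul_div_mul_left _ _ hc]

noncomputable def act (α β γ δ : ℂ) : OnePoint ℂ → OnePoint ℂ :=
  fun x => OnePoint.rec (divC α γ) (fun z => divC (α * z + β) (γ * z + δ)) x

@[simp] lemma act_infty (α β γ δ : ℂ) :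
    act α β γ δ OnePoint.infty = divC α γ := rfl

@[simp] lemma act_coe (α β γ δ : ℂ) (z : ℂ) :
    act α β γ δ (z : OnePoint ℂ) = divC (α * z + β) (γ * z + δ) := rfl

lemma act_divC (α β γ δ p q : ℂ) (hpq : ¬(p = 0 ∧ q = 0)) :
    act α β γ δ (divC p q) = divC (α * p + β * q) (γ * p + δ * q) := by
  by_cases hq : q = 0
  · subst hq
    have hp : p ≠ 0 := fun h => hpq ⟨h, rfl⟩
    rw [show divC p 0 = OnePoint.infty from if_pos rfl, act_infty]
    rw [show α * p + β * 0 = p * α by ring, show γ * p + δ * 0 = p * γ by ring,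
      divC_smul hp]
  · rw [show divC p q = ((p / q : ℂ) : OnePoint ℂ) from if_neg hq, act_coe]
    have h1 : α * (p / q) + β = q⁻¹ * (α * p + β * q) := by field_simp
    have h2 : γ * (p / q) + δ = q⁻¹ * (γ * p + δ * q) := by field_simp
    rw [h1, h2, divC_smul (inv_ne_zero hq)]

lemma exists_rep (x : OnePoint ℂ) : ∃ p q : ℂ, ¬(p = 0 ∧ q = 0) ∧ x = divC p q := by
  induction x using OnePoint.rec with
  | infty => exact ⟨1, 0, by norm_num, by simp [divC]⟩
  | coe z => exact ⟨z, 1, by norm_num, by simp [divC]⟩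

lemma FareyAdj_symm {d : ℕ} {x y : OnePoint ℂ} (h : FareyAdj d x y) : FareyAdj d y x := by
  obtain ⟨p₁, q₁, p₂, q₂, h1, h2, h3, h4, h5, h6, h7, h8, h9⟩ := h
  refine ⟨p₂, q₂, p₁, q₁, h3, h4, h1, h2, h6, h5, h8, h7, ?_⟩
  rw [show p₂ * q₁ - p₁ * q₂ = -(p₁ * q₂ - p₂ * q₁) by ring, norm_neg, h9]

lemma FareyAdj_act (d : ℕ) (α β γ δ e : ℂ)
    (hα : α ∈ ringInt d) (hβ : β ∈ ringInt d) (hγ : γ ∈ ringInt d) (hδ : δ ∈ ringInt d)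
    (he : α * δ - β * γ = e) (he1 : e = 1 ∨ e = -1)
    {x y : OnePoint ℂ} (hxy : FareyAdj d x y) :
    FareyAdj d (act α β γ δ x) (act α β γ δ y) := by
  have hemem : e ∈ ringInt d := by
    rcases he1 with h | h
    · rw [h]; exact one_mem d
    · rw [h]; exact neg_one_mem d
  have he2 : e * e = 1 := by rcases he1 with h | h <;> rw [h] <;> norm_num
  have habse : ‖e‖ = 1 := by rcases he1 with h | h <;> rw [h] <;> simp
  obtain ⟨p₁, q₁, p₂, q₂, hp₁, hq₁, hp₂, hq₂, hc₁, hc₂, hx, hy, hdet⟩ := hxy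
  have key : ∀ p q : ℂ, p ∈ ringInt d → q ∈ ringInt d → CoprimeIn d p q →
      (α * p + β * q ∈ ringInt d ∧ γ * p + δ * q ∈ ringInt d ∧
        CoprimeIn d (α * p + β * q) (γ * p + δ * q) ∧ ¬(p = 0 ∧ q = 0)) := by
    intro p q hp hq hc
    obtain ⟨u, v, hu, hv, huv⟩ := hc
    refine ⟨add_mem (mul_mem hα hp) (mul_mem hβ hq),
      add_mem (mul_mem hγ hp) (mul_mem hδ hq), ?_, ?_⟩
    · refine ⟨e * (u * δ - v * γ), e * (v * α - u * β), ?_, ?_, ?_⟩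
      · exact mul_mem hemem (add_mem (mul_mem hu hδ) (neg_mem (mul_mem hv hγ)))
      · exact mul_mem hemem (add_mem (mul_mem hv hα) (neg_mem (mul_mem hu hβ)))
      · have expand : (e * (u * δ - v * γ)) * (α * p + β * q) +
            (e * (v * α - u * β)) * (γ * p + δ * q)
            = (e * (α * δ - β * γ)) * (u * p + v * q) := by ring
        rw [expand, he, huv, mul_one, he2]
    · rintro ⟨rfl, rfl⟩
      simp at huv
  obtain ⟨hP₁, hQ₁, hC₁, hne₁⟩ := key p₁ q₁ hp₁ hq₁ hc₁
  obtain ⟨hP₂, hQ₂, hC₂, hne₂⟩ := key p₂ q₂ hp₂ hq₂ hc₂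
  refine ⟨α * p₁ + β * q₁, γ * p₁ + δ * q₁, α * p₂ + β * q₂, γ * p₂ + δ * q₂,
    hP₁, hQ₁, hP₂, hQ₂, hC₁, hC₂, ?_, ?_, ?_⟩
  · rw [hx, act_divC _ _ _ _ _ _ hne₁]
  · rw [hy, act_divC _ _ _ _ _ _ hne₂]
  · have : (α * p₁ + β * q₁) * (γ * p₂ + δ * q₂) - (α * p₂ + β * q₂) * (γ * p₁ + δ * q₁)
        = e * (p₁ * q₂ - p₂ * q₁) := by linear_combination (p₁ * q₂ - p₂ * q₁) * he
    rw [this, norm_mul, hdet, mul_one, habse]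

end RevAux
namespace RevAux

/-! ### Shifted convergent sequences -/

noncomputable def PP (a : ℕ → ℂ) : ℕ → ℂ
  | 0 => 1
  | 1 => 0
  | (k + 2) => a (k + 1) * PP a (k + 1) + PP a k

noncomputable def QQ (a : ℕ → ℂ) : ℕ → ℂ
  | 0 => 0
  | 1 => 1
  | (k + 2) => a (k + 1) * QQ a (k + 1) + QQ a k

lemma PP_two (a : ℕ → ℂ) (k : ℕ) :
    PP a (k + 2) = a (k + 1) * PP a (k + 1) + PP a k := by rw [PP]

lemma QQ_two (a : ℕ → ℂ) (k : ℕ) :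
    QQ a (k + 2) = a (k + 1) * QQ a (k + 1) + QQ a k := by rw [QQ]

lemma cfP_eq (a : ℕ → ℂ) : ∀ k, cfP a k = PP a (k + 1)
  | 0 => by rw [cfP, PP]
  | 1 => by rw [cfP, PP_two, PP, PP]; ring
  | (k + 2) => by
      rw [cfP, cfP_eq a (k + 1), cfP_eq a k, PP_two a (k + 1)]

lemma cfQ_eq (a : ℕ → ℂ) : ∀ k, cfQ a k = QQ a (k + 1)
  | 0 => by rw [cfQ, QQ]
  | 1 => by rw [cfQ, QQ_two, QQ, QQ]; ring
  | (k + 2) => by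
      rw [cfQ, cfQ_eq a (k + 1), cfQ_eq a k, QQ_two a (k + 1)]

lemma cfWalk_eq (a : ℕ → ℂ) (k : ℕ) : cfWalk a k = divC (PP a k) (QQ a k) := by
  cases k with
  | zero => rw [cfWalk]; simp [PP, QQ, divC]
  | succ k =>
      rw [cfWalk]
      simp only [Nat.succ_ne_zero, if_false, Nat.add_sub_cancel]
      rw [cfP_eq, cfQ_eq]

lemma PP_mem (d : ℕ) (a : ℕ → ℂ) (M : ℕ) (ha : ∀ i, 1 ≤ i → i ≤ M → a i ∈ ringInt d) :
    ∀ k, k ≤ M + 1 → PP a k ∈ ringInt d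
  | 0, _ => one_mem d
  | 1, _ => zero_mem d
  | (k + 2), h => by
      rw [PP_two]
      exact add_mem (mul_mem (ha (k + 1) (by omega) (by omega))
        (PP_mem d a M ha (k + 1) (by omega))) (PP_mem d a M ha k (by omega))

lemma QQ_mem (d : ℕ) (a : ℕ → ℂ) (M : ℕ) (ha : ∀ i, 1 ≤ i → i ≤ M → a i ∈ ringInt d) :
    ∀ k, k ≤ M + 1 → QQ a k ∈ ringInt d
  | 0, _ => zero_mem d
  | 1, _ => one_mem d
  | (k + 2), h => by
      rw [QQ_two]
      exact add_mem (mul_mem (ha (k + 1) (by omega) (by omega))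
        (QQ_mem d a M ha (k + 1) (by omega))) (QQ_mem d a M ha k (by omega))

lemma det_PQ (a : ℕ → ℂ) :
    ∀ k, PP a (k + 1) * QQ a k - PP a k * QQ a (k + 1) = (-1) ^ (k + 1)
  | 0 => by rw [PP, PP, QQ, QQ]; ring
  | (k + 1) => by
      have ih := det_PQ a k
      rw [PP_two, QQ_two]
      linear_combination -ih

lemma PQ_ne_zero (a : ℕ → ℂ) (k : ℕ) : ¬(PP a k = 0 ∧ QQ a k = 0) := by
  rintro ⟨h1, h2⟩
  have h := det_PQ a k
  rw [h1, h2, mul_zero, zero_mul, sub_zero] at h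
  exact absurd h.symm (pow_ne_zero _ (by norm_num))

/-! ### Every convergent walk is a walk -/

lemma cfWalk_isWalk (d : ℕ) (a : ℕ → ℂ) (M : ℕ)
    (ha : ∀ i, 1 ≤ i → i ≤ M → a i ∈ ringInt d) :
    IsWalk d (M + 1) (cfWalk a) := by
  intro k hk
  rw [cfWalk_eq, cfWalk_eq]
  have hP1 := PP_mem d a M ha k (by omega)
  have hP2 := PP_mem d a M ha (k + 1) (by omega)
  have hQ1 := QQ_mem d a M ha k (by omega)
  have hQ2 := QQ_mem d a M ha (k + 1) (by omega)
  have hdet := det_PQ a k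
  have hsmem : ((-1 : ℂ)) ^ (k + 1) ∈ ringInt d := neg_one_pow_mem d (k + 1)
  have hss : ((-1 : ℂ)) ^ (k + 1) * ((-1 : ℂ)) ^ (k + 1) = 1 := by
    rcases neg_one_pow_eq_or ℂ (k + 1) with h | h <;> rw [h] <;> norm_num
  refine ⟨PP a k, QQ a k, PP a (k + 1), QQ a (k + 1), hP1, hQ1, hP2, hQ2, ?_, ?_, rfl, rfl, ?_⟩
  · refine ⟨-((-1 : ℂ)) ^ (k + 1) * QQ a (k + 1), ((-1 : ℂ)) ^ (k + 1) * PP a (k + 1),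
      mul_mem (neg_mem hsmem) hQ2, mul_mem hsmem hP2, ?_⟩
    linear_combination ((-1 : ℂ)) ^ (k + 1) * hdet + hss
  · refine ⟨((-1 : ℂ)) ^ (k + 1) * QQ a k, -((-1 : ℂ)) ^ (k + 1) * PP a k,
      mul_mem hsmem hQ1, mul_mem (neg_mem hsmem) hP1, ?_⟩
    linear_combination ((-1 : ℂ)) ^ (k + 1) * hdet + hss
  · have heq : PP a k * QQ a (k + 1) - PP a (k + 1) * QQ a k = -((-1 : ℂ)) ^ (k + 1) := by
      linear_combination -hdet
    rw [heq, norm_neg]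
    rw [norm_pow, norm_neg, norm_one, one_pow]

/-! ### The transposition identities -/

lemma key_ids (a b : ℕ → ℂ) :
    ∀ m j n : ℕ, n = m + j → (∀ k, 1 ≤ k → k ≤ m → b k = a (n + 1 - k)) →
      PP b (m + 1) * PP a (j + 1) + PP b m * PP a j = PP a n ∧
      PP b (m + 1) * QQ a (j + 1) + PP b m * QQ a j = QQ a n ∧
      QQ b (m + 1) * PP a (j + 1) + QQ b m * PP a j = PP a (n + 1) ∧
      QQ b (m + 1) * QQ a (j + 1) + QQ b m * QQ a j = QQ a (n + 1)
  | 0, j, n, hn, hb => by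
      subst hn
      rw [PP, PP, QQ, QQ]  -- PP b 1, PP b 0, QQ b 1, QQ b 0
      refine ⟨by ring, by ring, ?_, ?_⟩ <;> · rw [Nat.zero_add]; ring
  | (m + 1), j, n, hn, hb => by
      obtain ⟨i1, i2, i3, i4⟩ := key_ids a b m (j + 1) n (by omega)
        (fun k h1 h2 => hb k h1 (by omega))
      have hbm : b (m + 1) = a (j + 1) := by
        rw [hb (m + 1) (by omega) (by omega)]
        congr 1
        omega
      have hPa : PP a (j + 2) = a (j + 1) * PP a (j + 1) + PP a j := PP_two a j
      have hQa : QQ a (j + 2) = a (j + 1) * QQ a (j + 1) + QQ a j := QQ_two a j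
      have hPb : PP b (m + 2) = a (j + 1) * PP b (m + 1) + PP b m := by
        rw [PP_two, hbm]
      have hQb : QQ b (m + 2) = a (j + 1) * QQ b (m + 1) + QQ b m := by
        rw [QQ_two, hbm]
      rw [hPa] at i1 i3
      rw [hQa] at i2 i4
      refine ⟨?_, ?_, ?_, ?_⟩
      · rw [hPb]; linear_combination i1
      · rw [hPb]; linear_combination i2
      · rw [hQb]; linear_combination i3
      · rw [hQb]; linear_combination i4

end RevAux
/-- Let `d ∈ {1,2,3,7,11}` and `a₁, …, a_n ∈ ℤ[ω_d]`. If
`R = [a₁,…,a_n]` is a geodesic continued fraction expansion (every walk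
`∞ → 0 → [a₁] → ⋯ → [a₁,…,a_m]` along its convergents is a geodesic path in the
Farey graph `E_d`), then the reversed expansion `R* = [a_n, a_{n−1}, …, a₁]` is
also a geodesic continued fraction expansion. -/
theorem reversed_expansion_geodesic (d : ℕ) (hd : d ∈ ({1, 2, 3, 7, 11} : Set ℕ))
    (n : ℕ) (hn : 1 ≤ n) (a : ℕ → ℂ)
    (ha : ∀ k, 1 ≤ k → k ≤ n → a k ∈ ringInt d)
    (hgeo : ∀ m ≤ n, IsGeodesicWalk d (m + 1) (cfWalk a)) :
    ∀ m ≤ n, IsGeodesicWalk d (m + 1) (cfWalk (fun k => a (n + 1 - k))) := by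
  open RevAux in
  intro m hm
  set b : ℕ → ℂ := fun k => a (n + 1 - k) with hbdef
  obtain ⟨hwalk_a, hmin_a⟩ := hgeo n le_rfl
  constructor
  · refine cfWalk_isWalk d b m (fun i hi1 hi2 => ?_)
    exact ha (n + 1 - i) (by omega) (by omega)
  · intro L g hg h0 hL
    obtain ⟨j, hj⟩ : ∃ j, n = m + j := ⟨n - m, by omega⟩
    obtain ⟨i1, i2, i3, i4⟩ := key_ids a b m j n hj (fun k _ _ => rfl)
    have hαm : PP a (n + 1) ∈ ringInt d := PP_mem d a n ha (n + 1) le_rfl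
    have hβm : -PP a n ∈ ringInt d := neg_mem (PP_mem d a n ha n (by omega))
    have hγm : QQ a (n + 1) ∈ ringInt d := QQ_mem d a n ha (n + 1) le_rfl
    have hδm : -QQ a n ∈ ringInt d := neg_mem (QQ_mem d a n ha n (by omega))
    have hdetB : PP a (n + 1) * (-QQ a n) - (-PP a n) * QQ a (n + 1) = (-1 : ℂ) ^ n := by
      linear_combination -(det_PQ a n)
    have he1 : ((-1 : ℂ)) ^ n = 1 ∨ ((-1 : ℂ)) ^ n = -1 := neg_one_pow_eq_or ℂ n
    have hgwalk : IsWalk d L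
        (fun k => act (PP a (n + 1)) (-PP a n) (QQ a (n + 1)) (-QQ a n) (g k)) := fun k hk =>
      FareyAdj_act d _ _ _ _ _ hαm hβm hγm hδm hdetB he1 (hg k hk)
    have h00 : cfWalk b 0 = OnePoint.infty := by simp [cfWalk]
    have hstart : act (PP a (n + 1)) (-PP a n) (QQ a (n + 1)) (-QQ a n) (g 0)
        = cfWalk a (n + 1) := by
      rw [h0, h00, act_infty, cfWalk_eq]
    have hend : act (PP a (n + 1)) (-PP a n) (QQ a (n + 1)) (-QQ a n) (g L)
        = cfWalk a j := by
      rw [hL, cfWalk_eq b (m + 1), act_divC _ _ _ _ _ _ (PQ_ne_zero b (m + 1))]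
      have hnum : PP a (n + 1) * PP b (m + 1) + (-PP a n) * QQ b (m + 1)
          = (-1) ^ (m + 1) * PP a j := by
        linear_combination (-(PP b (m + 1))) * i3 + (QQ b (m + 1)) * i1 +
          (PP a j) * (det_PQ b m)
      have hden : QQ a (n + 1) * PP b (m + 1) + (-QQ a n) * QQ b (m + 1)
          = (-1) ^ (m + 1) * QQ a j := by
        linear_combination (-(PP b (m + 1))) * i4 + (QQ b (m + 1)) * i2 +
          (QQ a j) * (det_PQ b m)
      rw [hnum, hden, divC_smul (pow_ne_zero _ (by norm_num : (-1 : ℂ) ≠ 0)),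
        ← cfWalk_eq]
    set G : ℕ → OnePoint ℂ := fun k =>
      if k ≤ j then cfWalk a k
      else act (PP a (n + 1)) (-PP a n) (QQ a (n + 1)) (-QQ a n) (g (L - (k - j))) with hG
    have hGwalk : IsWalk d (j + L) G := by
      intro k hk
      by_cases h1 : k + 1 ≤ j
      · have h2 : k ≤ j := by omega
        simp only [hG, if_pos h1, if_pos h2]
        exact hwalk_a k (by omega)
      · by_cases h2 : k ≤ j
        · have hkj : k = j := by omega
          have hL1 : 1 ≤ L := by omega
          simp only [hG, if_pos h2, if_neg h1]
          have hadj : FareyAdj d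
              (act (PP a (n + 1)) (-PP a n) (QQ a (n + 1)) (-QQ a n) (g (L - 1)))
              (act (PP a (n + 1)) (-PP a n) (QQ a (n + 1)) (-QQ a n) (g (L - 1 + 1))) :=
            hgwalk (L - 1) (by omega)
          rw [Nat.sub_add_cancel hL1] at hadj
          rw [show L - (k + 1 - j) = L - 1 by omega, hkj, ← hend]
          exact FareyAdj_symm hadj
        · simp only [hG, if_neg h2, if_neg h1]
          have hadj : FareyAdj d
              (act (PP a (n + 1)) (-PP a n) (QQ a (n + 1)) (-QQ a n) (g (L - (k + 1 - j))))
              (act (PP a (n + 1)) (-PP a n) (QQ a (n + 1)) (-QQ a n) (g (L - (k + 1 - j) + 1))) :=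
            hgwalk (L - (k + 1 - j)) (by omega)
          rw [show L - (k + 1 - j) + 1 = L - (k - j) by omega] at hadj
          exact FareyAdj_symm hadj
    have hG0 : G 0 = cfWalk a 0 := by simp only [hG, if_pos (Nat.zero_le j)]
    have hGend : G (j + L) = cfWalk a (n + 1) := by
      by_cases hL0 : L = 0
      · subst hL0
        simp only [hG, Nat.add_zero, if_pos le_rfl]
        rw [← hend, hstart]
      · simp only [hG, if_neg (by omega : ¬ j + L ≤ j)]
        rw [show L - (j + L - j) = 0 by omega, hstart]
    have hfin : n + 1 ≤ j + L := hmin_a (j + L) G hGwalk hG0 hGend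
    omega
end

section
/- Let d ∈ {1,2,3,7,11} and let x = [a₁,…,a_n] be a continued fraction expansion with a_ℓ ∈ ℤ[ω_d] and |a_ℓ| ≥ 4.17209 for every ℓ ∈ {1,…,n}. Then this expansion is geodesic: the walk ∞ → 0 = p₀/q₀ → p₁/q₁ → ⋯ → p_n/q_n = x along its convergents is a geodesic path in the Farey graph E_d from ∞ to x. -/
namespace RIaux

lemma int_one_le_sq {a : ℤ} (h : a ≠ 0) : 1 ≤ a ^ 2 := by
  rcases h.lt_or_gt with h | h <;> nlinarith

lemma omega_sq (d : ℕ) : ∃ c₀ c₁ : ℤ, omegaD d ^ 2 = (c₀ : ℂ) + (c₁ : ℂ) * omegaD d := by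
  have hs : ((Real.sqrt d : ℝ) : ℂ) ^ 2 = (d : ℂ) := by
    rw [← Complex.ofReal_pow, Real.sq_sqrt (by positivity)]
    norm_cast
  have hI : Complex.I ^ 2 = -1 := Complex.I_sq
  by_cases h : d % 4 = 3
  · refine ⟨-((d : ℤ) / 4 + 1), 1, ?_⟩
    have hd' : (d : ℂ) = 4 * (((d : ℤ) / 4 : ℤ) : ℂ) + 3 := by
      have h4 : (4 * ((d : ℤ) / 4) + 3 : ℤ) = (d : ℤ) := by omega
      exact_mod_cast (congrArg (Int.cast : ℤ → ℂ) h4).symm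
    simp only [omegaD, if_pos h]
    push_cast
    linear_combination (((Real.sqrt d : ℝ) : ℂ) ^ 2 / 4) * hI - (1/4 : ℂ) * hs - (1/4 : ℂ) * hd'
  · refine ⟨-(d : ℤ), 0, ?_⟩
    simp only [omegaD, if_neg h]
    push_cast
    linear_combination (((Real.sqrt d : ℝ) : ℂ) ^ 2) * hI - hs

lemma mem_intCast (d : ℕ) (m : ℤ) : (m : ℂ) ∈ ringInt d := ⟨m, 0, by push_cast; ring⟩

lemma mem_zero (d : ℕ) : (0 : ℂ) ∈ ringInt d := by simpa using mem_intCast d 0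

lemma mem_one (d : ℕ) : (1 : ℂ) ∈ ringInt d := by simpa using mem_intCast d 1

lemma mem_add {d : ℕ} {x y : ℂ} (hx : x ∈ ringInt d) (hy : y ∈ ringInt d) :
    x + y ∈ ringInt d := by
  obtain ⟨a, b, rfl⟩ := hx; obtain ⟨a', b', rfl⟩ := hy
  exact ⟨a + a', b + b', by push_cast; ring⟩

lemma mem_neg {d : ℕ} {x : ℂ} (hx : x ∈ ringInt d) : -x ∈ ringInt d := by
  obtain ⟨a, b, rfl⟩ := hx; exact ⟨-a, -b, by push_cast; ring⟩

lemma mem_sub {d : ℕ} {x y : ℂ} (hx : x ∈ ringInt d) (hy : y ∈ ringInt d) :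
    x - y ∈ ringInt d := by
  have := mem_add hx (mem_neg hy); simpa [sub_eq_add_neg] using this

lemma mem_mul {d : ℕ} {x y : ℂ} (hx : x ∈ ringInt d) (hy : y ∈ ringInt d) :
    x * y ∈ ringInt d := by
  obtain ⟨c₀, c₁, hc⟩ := omega_sq d
  obtain ⟨a, b, rfl⟩ := hx; obtain ⟨a', b', rfl⟩ := hy
  refine ⟨a * a' + b * b' * c₀, a * b' + a' * b + b * b' * c₁, ?_⟩
  push_cast
  linear_combination ((b : ℂ) * (b' : ℂ)) * hc

lemma mem_neg_one_pow (d : ℕ) (k : ℕ) : ((-1 : ℂ)) ^ k ∈ ringInt d := by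
  have := mem_intCast d ((-1) ^ k)
  simpa using this

lemma one_le_abs_of_mem {d : ℕ} (hd1 : 1 ≤ d) {z : ℂ} (hz : z ∈ ringInt d) (h0 : z ≠ 0) :
    1 ≤ ‖z‖ := by
  obtain ⟨a, b, rfl⟩ := hz
  have hs : ((Real.sqrt d : ℝ) : ℂ) ^ 2 = (d : ℂ) := by
    rw [← Complex.ofReal_pow, Real.sq_sqrt (by positivity)]; norm_cast
  have hI : Complex.I ^ 2 = -1 := Complex.I_sq
  have hd1' : (1 : ℝ) ≤ (d : ℝ) := by exact_mod_cast hd1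
  set z := (a : ℂ) + (b : ℂ) * omegaD d with hzdef
  have hzz : (Complex.normSq z : ℂ) = z * (starRingEnd ℂ) z := (Complex.mul_conj z).symm
  have hb0 : b = 0 → 1 ≤ Complex.normSq z := by
    intro hb
    have ha0 : a ≠ 0 := by
      rintro rfl
      simp [hzdef, hb] at h0
    have h1 : z = ((a : ℝ) : ℂ) := by simp [hzdef, hb]
    have : Complex.normSq z = (a : ℝ) ^ 2 := by
      rw [h1]; simp [Complex.normSq_apply]; ring
    rw [this]
    have := int_one_le_sq ha0
    exact_mod_cast this
  have key : 1 ≤ Complex.normSq z := by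
    rcases eq_or_ne b 0 with hb | hb
    · exact hb0 hb
    · by_cases h : d % 4 = 3
      · have hconj : (starRingEnd ℂ) (omegaD d) = 1 - omegaD d := by
          simp only [omegaD, if_pos h]
          rw [map_div₀, map_add, map_one, map_mul, Complex.conj_I, Complex.conj_ofReal,
            map_ofNat]
          ring
        have hω : omegaD d - omegaD d ^ 2 = (1 + (d : ℂ)) / 4 := by
          simp only [omegaD, if_pos h]
          linear_combination (-(((Real.sqrt d : ℝ) : ℂ) ^ 2) / 4) * hI + (1/4 : ℂ) * hs
        have hcz : (starRingEnd ℂ) z = (a : ℂ) + (b : ℂ) * (1 - omegaD d) := by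
          simp [hzdef, map_add, map_mul, hconj]
        have h1 : (Complex.normSq z : ℂ)
            = ((a : ℂ) ^ 2 + a * b + (b : ℂ) ^ 2 * (1 + (d : ℂ)) / 4) := by
          rw [hzz, hcz, hzdef]
          linear_combination ((b : ℂ) ^ 2) * hω
        have h2 : Complex.normSq z
            = (a : ℝ) ^ 2 + (a : ℝ) * b + (b : ℝ) ^ 2 * (1 + (d : ℝ)) / 4 := by
          exact_mod_cast h1
        have hd3 : (3 : ℝ) ≤ (d : ℝ) := by
          have : 3 ≤ d := by omega
          exact_mod_cast this
        have hN : (1 : ℤ) ≤ a ^ 2 + a * b + b ^ 2 := by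
          nlinarith [sq_nonneg (2 * a + b), int_one_le_sq hb]
        have hN' : (1 : ℝ) ≤ (a : ℝ) ^ 2 + (a : ℝ) * b + (b : ℝ) ^ 2 := by exact_mod_cast hN
        have hb1 : (1 : ℝ) ≤ (b : ℝ) ^ 2 := by exact_mod_cast int_one_le_sq hb
        rw [h2]; nlinarith
      · have hconj : (starRingEnd ℂ) (omegaD d) = -omegaD d := by
          simp only [omegaD, if_neg h]
          rw [map_mul, Complex.conj_I, Complex.conj_ofReal]
          ring
        have hω : omegaD d ^ 2 = -(d : ℂ) := by
          simp only [omegaD, if_neg h]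
          linear_combination (((Real.sqrt d : ℝ) : ℂ) ^ 2) * hI - hs
        have hcz : (starRingEnd ℂ) z = (a : ℂ) - (b : ℂ) * omegaD d := by
          simp [hzdef, map_add, map_mul, hconj]; ring
        have h1 : (Complex.normSq z : ℂ) = ((a : ℂ) ^ 2 + (b : ℂ) ^ 2 * (d : ℂ)) := by
          rw [hzz, hcz, hzdef]
          linear_combination (-(b : ℂ) ^ 2) * hω
        have h2 : Complex.normSq z = (a : ℝ) ^ 2 + (b : ℝ) ^ 2 * (d : ℝ) := by
          exact_mod_cast h1
        have hb1 : (1 : ℝ) ≤ (b : ℝ) ^ 2 := by exact_mod_cast int_one_le_sq hb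
        rw [h2]; nlinarith [sq_nonneg (a : ℝ)]
  have hsq : ‖z‖ ^ 2 = Complex.normSq z := Complex.sq_norm z
  nlinarith [norm_nonneg z]

lemma rep_rel {d : ℕ} (hd1 : 1 ≤ d) {X : OnePoint ℂ} {r s r' s' : ℂ}
    (hr : r ∈ ringInt d) (hs : s ∈ ringInt d) (hcop : CoprimeIn d r s)
    (hr' : r' ∈ ringInt d) (hs' : s' ∈ ringInt d) (hcop' : CoprimeIn d r' s')
    (hX : X = divC r s) (hX' : X = divC r' s') :
    ∀ P Q : ℂ, ‖Q * r' - P * s'‖ = ‖Q * r - P * s‖ := by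
  have heq : divC r s = divC r' s' := hX ▸ hX'
  have hrs : r * s' = r' * s := by
    by_cases h0 : s = 0
    · by_cases h0' : s' = 0
      · rw [h0, h0']; ring
      · exfalso; rw [divC, if_pos h0, divC, if_neg h0'] at heq
        exact (OnePoint.infty_ne_coe _) heq
    · by_cases h0' : s' = 0
      · exfalso; rw [divC, if_neg h0, divC, if_pos h0'] at heq
        exact (OnePoint.coe_ne_infty _) heq
      · rw [divC, if_neg h0, divC, if_neg h0', OnePoint.coe_eq_coe] at heq
        exact (div_eq_div_iff h0 h0').mp heq
  obtain ⟨u, v, hu, hv, huv⟩ := hcop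
  obtain ⟨u', v', hu', hv', hu'v'⟩ := hcop'
  set ε := u * r' + v * s' with hε
  set ε' := u' * r + v' * s with hε'
  have hεr : ε * r = r' := by rw [hε]; linear_combination r' * huv + v * hrs
  have hεs : ε * s = s' := by rw [hε]; linear_combination s' * huv - u * hrs
  have hε'r : ε' * r' = r := by rw [hε']; linear_combination r * hu'v' - v' * hrs
  have hε's : ε' * s' = s := by rw [hε']; linear_combination s * hu'v' + u' * hrs
  have hunit : ε * ε' = 1 := by
    have hne : r ≠ 0 ∨ s ≠ 0 := by
      by_contra hcon
      push_neg at hcon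
      rw [hcon.1, hcon.2] at huv; simp at huv
    rcases hne with h | h
    · have : ε * ε' * r = 1 * r := by
        calc ε * ε' * r = ε' * (ε * r) := by ring
        _ = ε' * r' := by rw [hεr]
        _ = r := hε'r
        _ = 1 * r := by ring
      exact mul_right_cancel₀ h this
    · have : ε * ε' * s = 1 * s := by
        calc ε * ε' * s = ε' * (ε * s) := by ring
        _ = ε' * s' := by rw [hεs]
        _ = s := hε's
        _ = 1 * s := by ring
      exact mul_right_cancel₀ h this
  have hεmem : ε ∈ ringInt d := mem_add (mem_mul hu hr') (mem_mul hv hs')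
  have hε'mem : ε' ∈ ringInt d := mem_add (mem_mul hu' hr) (mem_mul hv' hs)
  have hεne : ε ≠ 0 := by intro h; rw [h, zero_mul] at hunit; exact zero_ne_one hunit
  have hε'ne : ε' ≠ 0 := by intro h; rw [h, mul_zero] at hunit; exact zero_ne_one hunit
  have h1 : 1 ≤ ‖ε‖ := one_le_abs_of_mem hd1 hεmem hεne
  have h2 : 1 ≤ ‖ε'‖ := one_le_abs_of_mem hd1 hε'mem hε'ne
  have h3 : ‖ε‖ * ‖ε'‖ = 1 := by
    rw [← norm_mul, hunit, norm_one]
  have habs1 : ‖ε‖ = 1 := by nlinarith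
  intro P Q
  have : Q * r' - P * s' = ε * (Q * r - P * s) := by
    linear_combination (-Q) * hεr + P * hεs
  rw [this, norm_mul, habs1, one_mul]

noncomputable def Pm (a : ℕ → ℂ) : ℕ → ℂ
  | 0 => 1
  | (j + 1) => cfP a j

noncomputable def Qm (a : ℕ → ℂ) : ℕ → ℂ
  | 0 => 0
  | (j + 1) => cfQ a j

lemma Pm_rec (a : ℕ → ℂ) (j : ℕ) : Pm a (j + 2) = a (j + 1) * Pm a (j + 1) + Pm a j := by
  cases j with
  | zero => simp [Pm, cfP]
  | succ k => simp [Pm, cfP]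

lemma Qm_rec (a : ℕ → ℂ) (j : ℕ) : Qm a (j + 2) = a (j + 1) * Qm a (j + 1) + Qm a j := by
  cases j with
  | zero => simp [Qm, cfQ]
  | succ k => simp [Qm, cfQ]

lemma det_PQ (a : ℕ → ℂ) (j : ℕ) :
    Pm a (j + 1) * Qm a j - Pm a j * Qm a (j + 1) = (-1 : ℂ) ^ (j + 1) := by
  induction j with
  | zero => simp [Pm, Qm, cfP, cfQ]
  | succ k ih =>
    rw [Pm_rec, Qm_rec]
    ring_nf
    ring_nf at ih
    linear_combination -ih

lemma walk_eq (a : ℕ → ℂ) (k : ℕ) : cfWalk a k = divC (Pm a k) (Qm a k) := by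
  cases k with
  | zero => simp [cfWalk, divC, Pm, Qm]
  | succ j => simp [cfWalk, Pm, Qm]

noncomputable def nuF (a : ℕ → ℂ) (r s : ℂ) (j : ℕ) : ℂ := Qm a j * r - Pm a j * s

lemma nuF_rec (a : ℕ → ℂ) (r s : ℂ) (j : ℕ) :
    nuF a r s (j + 2) = a (j + 1) * nuF a r s (j + 1) + nuF a r s j := by
  unfold nuF; rw [Pm_rec, Qm_rec]; ring

lemma abs_sub_lower (x y : ℂ) : ‖x‖ - ‖y‖ ≤ ‖x - y‖ := by
  have h := norm_add_le (x - y) y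
  simp only [sub_add_cancel] at h
  linarith

lemma not_both_zero {d : ℕ} (a : ℕ → ℂ) {r s : ℂ} (hcop : CoprimeIn d r s) (j : ℕ)
    (h1 : nuF a r s j = 0) (h2 : nuF a r s (j + 1) = 0) : False := by
  have hdetj := det_PQ a j
  have hne : ((-1 : ℂ) ^ (j + 1)) ≠ 0 := by
    apply pow_ne_zero; norm_num
  have hr : r = 0 := by
    have h3 : (-1 : ℂ) ^ (j + 1) * r = 0 := by
      unfold nuF at h1 h2
      linear_combination (Pm a (j + 1)) * h1 - (Pm a j) * h2 - r * hdetj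
    exact (mul_eq_zero.mp h3).resolve_left hne
  have hs : s = 0 := by
    have h3 : (-1 : ℂ) ^ (j + 1) * s = 0 := by
      unfold nuF at h1 h2
      linear_combination (Qm a (j + 1)) * h1 - (Qm a j) * h2 - s * hdetj
    exact (mul_eq_zero.mp h3).resolve_left hne
  obtain ⟨u, v, _, _, huv⟩ := hcop
  rw [hr, hs] at huv
  simp at huv

lemma cop_right {d : ℕ} (a : ℕ → ℂ) (k : ℕ)
    (h1 : Pm a k ∈ ringInt d) (h2 : Qm a k ∈ ringInt d) :
    CoprimeIn d (Pm a (k + 1)) (Qm a (k + 1)) := by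
  refine ⟨(-1 : ℂ) ^ (k + 1) * Qm a k, (-1 : ℂ) ^ k * Pm a k,
    mem_mul (mem_neg_one_pow d _) h2, mem_mul (mem_neg_one_pow d _) h1, ?_⟩
  have h := det_PQ a k
  have hε2 : ((-1 : ℂ) ^ k) * ((-1 : ℂ) ^ k) = 1 := by
    rw [← mul_pow]; norm_num
  rw [pow_succ] at h ⊢
  linear_combination (-(-1 : ℂ) ^ k) * h + hε2

lemma cop_left {d : ℕ} (a : ℕ → ℂ) (k : ℕ)
    (h1 : Pm a (k + 1) ∈ ringInt d) (h2 : Qm a (k + 1) ∈ ringInt d) :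
    CoprimeIn d (Pm a k) (Qm a k) := by
  refine ⟨(-1 : ℂ) ^ k * Qm a (k + 1), (-1 : ℂ) ^ (k + 1) * Pm a (k + 1),
    mem_mul (mem_neg_one_pow d _) h2, mem_mul (mem_neg_one_pow d _) h1, ?_⟩
  have h := det_PQ a k
  have hε2 : ((-1 : ℂ) ^ k) * ((-1 : ℂ) ^ k) = 1 := by
    rw [← mul_pow]; norm_num
  rw [pow_succ] at h ⊢
  linear_combination (-(-1 : ℂ) ^ k) * h + hε2

end RIaux

open RIaux in
/-- Let `d ∈ {1,2,3,7,11}` and let `x = [a₁,…,a_n]` be a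
continued fraction expansion with `a_ℓ ∈ ℤ[ω_d]` and `|a_ℓ| ≥ 4.17209` for all
`ℓ`. Then this expansion is geodesic: the walk
`∞ → 0 = p₀/q₀ → p₁/q₁ → ⋯ → p_n/q_n = x` along its convergents is a geodesic
path in the Farey graph `E_d` from `∞` to `x`. -/
theorem large_digits_imply_geodesic (d : ℕ) (hd : d ∈ ({1, 2, 3, 7, 11} : Set ℕ))
    (n : ℕ) (hn : 1 ≤ n) (a : ℕ → ℂ)
    (ha : ∀ k, 1 ≤ k → k ≤ n →
      a k ∈ ringInt d ∧ (4.17209 : ℝ) ≤ ‖a k‖) :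
    IsGeodesicWalk d (n + 1) (cfWalk a) := by
  classical
  have hd1 : 1 ≤ d := by
    simp only [Set.mem_insert_iff, Set.mem_singleton_iff] at hd
    rcases hd with rfl | rfl | rfl | rfl | rfl <;> norm_num
  -- memberships of Pm, Qm up to n+1
  have memPQ : ∀ j, j ≤ n + 1 → Pm a j ∈ ringInt d ∧ Qm a j ∈ ringInt d := by
    intro j
    induction j using Nat.strong_induction_on with
    | _ j ih =>
      match j with
      | 0 => exact fun _ => ⟨mem_one d, mem_zero d⟩
      | 1 => intro _
             constructor
             · show cfP a 0 ∈ ringInt d; exact mem_zero d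
             · show cfQ a 0 ∈ ringInt d; exact mem_one d
      | (k + 2) =>
        intro hk
        have hmem1 := ih (k + 1) (by omega) (by omega)
        have hmem0 := ih k (by omega) (by omega)
        have hak : a (k + 1) ∈ ringInt d := (ha (k + 1) (by omega) (by omega)).1
        rw [Pm_rec, Qm_rec]
        exact ⟨mem_add (mem_mul hak hmem1.1) hmem0.1, mem_add (mem_mul hak hmem1.2) hmem0.2⟩
  have memNu : ∀ (r s : ℂ), r ∈ ringInt d → s ∈ ringInt d → ∀ j, j ≤ n + 1 →
      nuF a r s j ∈ ringInt d := by
    intro r s hr hs j hj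
    exact mem_sub (mem_mul (memPQ j hj).2 hr) (mem_mul (memPQ j hj).1 hs)
  -- Part 1 : the convergent walk is a walk
  have hwalk : IsWalk d (n + 1) (cfWalk a) := by
    intro k hk
    have habs : ‖Pm a k * Qm a (k + 1) - Pm a (k + 1) * Qm a k‖ = 1 := by
      have h : Pm a k * Qm a (k + 1) - Pm a (k + 1) * Qm a k = -((-1 : ℂ) ^ (k + 1)) := by
        linear_combination -(det_PQ a k)
      rw [h]
      simp
    exact ⟨Pm a k, Qm a k, Pm a (k + 1), Qm a (k + 1),
      (memPQ k (by omega)).1, (memPQ k (by omega)).2,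
      (memPQ (k + 1) (by omega)).1, (memPQ (k + 1) (by omega)).2,
      cop_left a k (memPQ (k + 1) (by omega)).1 (memPQ (k + 1) (by omega)).2,
      cop_right a k (memPQ k (by omega)).1 (memPQ k (by omega)).2,
      walk_eq a k, walk_eq a (k + 1), habs⟩
  refine ⟨hwalk, ?_⟩
  intro m g hg hg0 hgm
  -- the invariant
  have inv : ∀ k, k ≤ m → ∀ r s : ℂ, r ∈ ringInt d → s ∈ ringInt d → CoprimeIn d r s →
      g k = divC r s →
      ∃ j, j ≤ k ∧ (j = n + 1 ∨ (j ≤ n ∧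
        ‖nuF a r s j‖ ≤ ‖nuF a r s (j + 1)‖)) := by
    intro k
    induction k with
    | zero =>
      intro _ r s hr hs hcop hrep
      have h0 : g 0 = divC (1 : ℂ) 0 := by
        rw [hg0]
        simp [cfWalk, divC]
      have htr := rep_rel hd1 (mem_one d) (mem_zero d)
        ⟨1, 0, mem_one d, mem_zero d, by ring⟩ hr hs hcop h0 hrep
      refine ⟨0, le_refl 0, Or.inr ⟨Nat.zero_le n, ?_⟩⟩
      have e0 : ‖nuF a r s 0‖ = 0 := by
        have := htr (Pm a 0) (Qm a 0)
        unfold nuF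
        rw [this]
        show ‖Qm a 0 * 1 - Pm a 0 * 0‖ = 0
        show ‖(0 : ℂ) * 1 - 1 * 0‖ = 0
        simp
      rw [e0]
      exact norm_nonneg _
    | succ k ih =>
      intro hk1 r s hr hs hcop hrep
      obtain ⟨p₁, q₁, p₂, q₂, hp₁, hq₁, hp₂, hq₂, hc₁, hc₂, hx₁, hx₂, hdet⟩ :=
        hg k (by omega)
      obtain ⟨j, hjk, hPj⟩ := ih (by omega) p₁ q₁ hp₁ hq₁ hc₁ hx₁
      -- transfer from (r,s) to (p₂,q₂)
      have htr := rep_rel hd1 hp₂ hq₂ hc₂ hr hs hcop hx₂ hrep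
      have habs2 : ∀ i, ‖nuF a r s i‖ = ‖nuF a p₂ q₂ i‖ := by
        intro i; exact htr (Pm a i) (Qm a i)
      suffices hgood : ∃ j, j ≤ k + 1 ∧ (j = n + 1 ∨ (j ≤ n ∧
          ‖nuF a p₂ q₂ j‖ ≤ ‖nuF a p₂ q₂ (j + 1)‖)) by
        obtain ⟨j', hj', hP⟩ := hgood
        refine ⟨j', hj', ?_⟩
        rcases hP with h | ⟨h1, h2⟩
        · exact Or.inl h
        · exact Or.inr ⟨h1, by rw [habs2 j', habs2 (j' + 1)]; exact h2⟩
      by_contra hcon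
      push_neg at hcon
      have hnc : ∀ i, i ≤ k + 1 → i ≠ n + 1 ∧ (i ≤ n →
          ‖nuF a p₂ q₂ (i + 1)‖ < ‖nuF a p₂ q₂ i‖) := by
        intro i hi
        have := hcon i hi
        exact this
      -- j is not n+1
      have hjn1 : j ≠ n + 1 := (hnc j (by omega)).1
      have hPj2 : j ≤ n ∧ ‖nuF a p₁ q₁ j‖ ≤ ‖nuF a p₁ q₁ (j + 1)‖ :=
        hPj.resolve_left hjn1
      have hj1n : j + 1 ≤ n := by
        have := (hnc (j + 1) (by omega)).1
        omega
      have hv1 : ‖nuF a p₂ q₂ (j + 1)‖ < ‖nuF a p₂ q₂ j‖ :=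
        (hnc j (by omega)).2 hPj2.1
      have hv2 : ‖nuF a p₂ q₂ (j + 2)‖ < ‖nuF a p₂ q₂ (j + 1)‖ :=
        (hnc (j + 1) (by omega)).2 hj1n
      set A := nuF a p₁ q₁ j with hA
      set B := nuF a p₁ q₁ (j + 1) with hB
      set C := nuF a p₂ q₂ j with hC
      set Dv := nuF a p₂ q₂ (j + 1) with hD
      have hB0 : B ≠ 0 := by
        intro h0
        have hthis := hPj2.2
        rw [h0] at hthis
        simp only [norm_zero] at hthis
        have hA0 : A = 0 :=
          norm_eq_zero.mp (le_antisymm hthis (norm_nonneg _))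
        exact not_both_zero a hc₁ j hA0 h0
      have hB1 : 1 ≤ ‖B‖ :=
        one_le_abs_of_mem hd1 (memNu p₁ q₁ hp₁ hq₁ (j + 1) (by omega)) hB0
      have hD0 : Dv ≠ 0 := by
        intro h0
        rw [h0] at hv2
        simp only [norm_zero] at hv2
        exact absurd hv2 (not_lt.mpr (norm_nonneg _))
      have hD1 : 1 ≤ ‖Dv‖ :=
        one_le_abs_of_mem hd1 (memNu p₂ q₂ hp₂ hq₂ (j + 1) (by omega)) hD0
      have haj := ha (j + 1) (by omega) hj1n
      -- lower bound for |C|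
      have hCl : (4.17209 - 1) * ‖Dv‖ ≤ ‖C‖ := by
        have hrec := nuF_rec a p₂ q₂ j
        have h5 : ‖a (j + 1) * Dv‖ - ‖nuF a p₂ q₂ (j + 2)‖
            ≤ ‖C‖ := by
          have h6 := abs_sub_lower (a (j + 1) * Dv) (nuF a p₂ q₂ (j + 2))
          have h7 : a (j + 1) * Dv - nuF a p₂ q₂ (j + 2) = -C := by
            rw [hD, hC]; linear_combination -hrec
          rw [h7, norm_neg] at h6
          exact h6
        have h6 : ‖a (j + 1) * Dv‖ = ‖a (j + 1)‖ * ‖Dv‖ :=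
          norm_mul _ _
        have h8 : (4.17209 : ℝ) * ‖Dv‖ ≤ ‖a (j + 1)‖ * ‖Dv‖ :=
          mul_le_mul_of_nonneg_right haj.2 (norm_nonneg _)
        have h9 : ‖nuF a p₂ q₂ (j + 2)‖ ≤ ‖Dv‖ := le_of_lt hv2
        linarith [h5, h6 ▸ h5]
      -- the unimodular relation
      have hWid : A * Dv - B * C = (-1 : ℂ) ^ (j + 1) * (q₁ * p₂ - p₁ * q₂) := by
        rw [hA, hB, hC, hD]
        unfold nuF
        linear_combination (q₁ * p₂ - p₁ * q₂) * (det_PQ a j)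
      have hW1 : ‖A * Dv - B * C‖ = 1 := by
        rw [hWid, norm_mul]
        have h9 : q₁ * p₂ - p₁ * q₂ = -(p₁ * q₂ - p₂ * q₁) := by ring
        rw [h9, norm_neg, hdet]
        simp
      have htri : ‖B * C‖ - ‖A * Dv‖ ≤ ‖A * Dv - B * C‖ := by
        have h := abs_sub_lower (B * C) (A * Dv)
        have he : B * C - A * Dv = -(A * Dv - B * C) := by ring
        rw [he, norm_neg] at h
        exact h
      have hBC : ‖B * C‖ = ‖B‖ * ‖C‖ := norm_mul _ _
      have hAD : ‖A * Dv‖ = ‖A‖ * ‖Dv‖ := norm_mul _ _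
      have hAB : ‖A‖ ≤ ‖B‖ := hPj2.2
      have hP1 : ‖B‖ * ((4.17209 - 1) * ‖Dv‖) ≤
          ‖B‖ * ‖C‖ :=
        mul_le_mul_of_nonneg_left hCl (norm_nonneg _)
      have hP2 : ‖A‖ * ‖Dv‖ ≤ ‖B‖ * ‖Dv‖ :=
        mul_le_mul_of_nonneg_right hAB (norm_nonneg _)
      have hP3 : (1 : ℝ) ≤ ‖B‖ * ‖Dv‖ := by
        calc (1 : ℝ) = 1 * 1 := by norm_num
        _ ≤ ‖B‖ * ‖Dv‖ :=
            mul_le_mul hB1 hD1 (by norm_num) (le_trans zero_le_one hB1)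
      nlinarith [hW1, htri, hBC, hAD]
  -- apply at k = m with rep (Pm (n+1), Qm (n+1))
  have hrepm : g m = divC (Pm a (n + 1)) (Qm a (n + 1)) := by
    rw [hgm, walk_eq]
  obtain ⟨j, hjm, hP⟩ := inv m le_rfl (Pm a (n + 1)) (Qm a (n + 1))
    (memPQ (n + 1) le_rfl).1 (memPQ (n + 1) le_rfl).2
    (cop_right a n (memPQ n (by omega)).1 (memPQ n (by omega)).2) hrepm
  -- strict decrease for the final representation
  have hdec : ∀ t j, j + t = n →
      ‖nuF a (Pm a (n + 1)) (Qm a (n + 1)) (j + 1)‖ <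
      ‖nuF a (Pm a (n + 1)) (Qm a (n + 1)) j‖ := by
    intro t
    induction t with
    | zero =>
      intro j hj
      have hjn : j = n := by omega
      subst hjn
      have e1 : nuF a (Pm a (j + 1)) (Qm a (j + 1)) (j + 1) = 0 := by
        unfold nuF; ring
      have e2 : ‖nuF a (Pm a (j + 1)) (Qm a (j + 1)) j‖ = 1 := by
        have h9 : nuF a (Pm a (j + 1)) (Qm a (j + 1)) j = (-1 : ℂ) ^ (j + 1) := by
          unfold nuF
          linear_combination det_PQ a j
        rw [h9]
        simp
      rw [e1, e2, norm_zero]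
      norm_num
    | succ t iht =>
      intro j hj
      have ihj := iht (j + 1) (by omega)
      set r := Pm a (n + 1)
      set s := Qm a (n + 1)
      have hD0 : nuF a r s (j + 1) ≠ 0 := by
        intro h0
        rw [h0] at ihj
        simp only [norm_zero] at ihj
        exact absurd ihj (not_lt.mpr (norm_nonneg _))
      have hD1 : 1 ≤ ‖nuF a r s (j + 1)‖ :=
        one_le_abs_of_mem hd1 (memNu r s (memPQ (n + 1) le_rfl).1 (memPQ (n + 1) le_rfl).2
          (j + 1) (by omega)) hD0
      have haj := ha (j + 1) (by omega) (by omega)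
      have hrec := nuF_rec a r s j
      have h5 : ‖a (j + 1) * nuF a r s (j + 1)‖ -
          ‖nuF a r s (j + 2)‖ ≤ ‖nuF a r s j‖ := by
        have h6 := abs_sub_lower (a (j + 1) * nuF a r s (j + 1)) (nuF a r s (j + 2))
        have h7 : a (j + 1) * nuF a r s (j + 1) - nuF a r s (j + 2) = -(nuF a r s j) := by
          linear_combination -hrec
        rw [h7, norm_neg] at h6
        exact h6
      have h6 : ‖a (j + 1) * nuF a r s (j + 1)‖ =
          ‖a (j + 1)‖ * ‖nuF a r s (j + 1)‖ := norm_mul _ _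
      have h8 : (4.17209 : ℝ) * ‖nuF a r s (j + 1)‖ ≤
          ‖a (j + 1)‖ * ‖nuF a r s (j + 1)‖ :=
        mul_le_mul_of_nonneg_right haj.2 (norm_nonneg _)
      nlinarith [ihj, h5, h6 ▸ h5]
  rcases hP with h | ⟨hjn, hle⟩
  · omega
  · exfalso
    have := hdec (n - j) j (by omega)
    linarith
end

section
/- Let a₁, a₂, a ∈ ℂ and ρ₁, ρ₂, ρ > 0 with ρ₁ > ρ₂. Assume |a₁ − a₂| ≤ (2 − √2)·ρ₁, that the first two spheres do not overlap, i.e., |a₁ − a₂| ≥ 2√(ρ₁ρ₂), that the third sphere is tangent to the second, i.e., |a₂ − a| = 2√(ρ₂ρ), and that either (a, ρ) = (a₁, ρ₁) or |a₁ − a| ≥ 2√(ρ₁ρ). Then |a − a₁| + ρ ≤ ρ₁; equivalently, the closed disk in ℂ of radius ρ centered at a is contained in the closed disk of radius ρ₁ centered at a₁ (the vertical projection of the sphere of radius ρ tangent to ℂ at a lies inside the projection of the sphere of radius ρ₁ tangent to ℂ at a₁). -/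
lemma ford_key (x y z : ℝ) (hx : 0 < x) (hy : 0 < y) (hz : 0 < z)
    (h1 : 2*x*y ≤ (2 - Real.sqrt 2) * x^2)
    (h2 : 2*z*(x - y) ≤ (2 - Real.sqrt 2) * x^2) :
    (2 - Real.sqrt 2) * x^2 + 2*y*z + z^2 ≤ x^2 := by
  set s := Real.sqrt 2 with hsdef
  have hs : s ^ 2 = 2 := Real.sq_sqrt (by norm_num)
  have hs1 : 1 < s := by nlinarith [Real.sqrt_nonneg 2]
  have hs2 : s < 2 := by nlinarith [Real.sqrt_nonneg 2]
  have hyk : 2*y ≤ (2 - s)*x := le_of_mul_le_mul_left (by nlinarith) hx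
  have hsz : s*z ≤ (2 - s)*x := le_of_mul_le_mul_left (by nlinarith) hx
  have hz' : z ≤ (s - 1)*x := by
    have : s*z ≤ s*((s-1)*x) := by nlinarith
    exact le_of_mul_le_mul_left this (by linarith)
  have h3 : 2*y*z ≤ (2-s)*x*z := by nlinarith
  have h4 : (2-s)*x*z ≤ (2-s)*(s-1)*x^2 := by nlinarith
  have h5 : z^2 ≤ ((s-1)*x)^2 := by
    have := mul_le_mul hz' hz' hz.le (by nlinarith)
    nlinarith [this]
  nlinarith [h3, h4, h5]

/-- Let `a₁, a₂, a ∈ ℂ` and `ρ₁ > ρ₂ > 0`, `ρ > 0`, with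
`|a₁ − a₂| ≤ (2 − √2)ρ₁`; suppose the Ford spheres at `a₁, a₂` of radii
`ρ₁, ρ₂` do not overlap (`|a₁ − a₂| ≥ 2√(ρ₁ρ₂)`), the sphere at `a` of radius
`ρ` is tangent to the one at `a₂` (`|a₂ − a| = 2√(ρ₂ρ)`), and either
`(a, ρ) = (a₁, ρ₁)` or the spheres at `a` and `a₁` do not overlap
(`|a₁ − a| ≥ 2√(ρ₁ρ)`). Then `|a − a₁| + ρ ≤ ρ₁`; equivalently, the closed disk
of radius `ρ` centered at `a` (the vertical projection of the sphere at `a`)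
is contained in the closed disk of radius `ρ₁` centered at `a₁`. -/
theorem ford_sphere_projection_nested (a₁ a₂ a : ℂ) (ρ₁ ρ₂ ρ : ℝ)
    (hρ₁ : 0 < ρ₁) (hρ₂ : 0 < ρ₂) (hρ : 0 < ρ) (h21 : ρ₂ < ρ₁)
    (hclose : ‖a₁ - a₂‖ ≤ (2 - Real.sqrt 2) * ρ₁)
    (hsep : 2 * Real.sqrt (ρ₁ * ρ₂) ≤ ‖a₁ - a₂‖)
    (htan : ‖a₂ - a‖ = 2 * Real.sqrt (ρ₂ * ρ))
    (hG : (a = a₁ ∧ ρ = ρ₁) ∨ 2 * Real.sqrt (ρ₁ * ρ) ≤ ‖a₁ - a‖) :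
    ‖a - a₁‖ + ρ ≤ ρ₁ ∧
      Metric.closedBall a ρ ⊆ Metric.closedBall a₁ ρ₁ := by
  have key : ‖a - a₁‖ + ρ ≤ ρ₁ := by
    rcases hG with ⟨ha, hr⟩ | hG
    · simp [ha, hr]
    · set x := Real.sqrt ρ₁ with hxd
      set y := Real.sqrt ρ₂ with hyd
      set z := Real.sqrt ρ with hzd
      have hx : 0 < x := Real.sqrt_pos.2 hρ₁
      have hy : 0 < y := Real.sqrt_pos.2 hρ₂
      have hz : 0 < z := Real.sqrt_pos.2 hρ
      have hx2 : x^2 = ρ₁ := Real.sq_sqrt hρ₁.le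
      have hz2 : z^2 = ρ := Real.sq_sqrt hρ.le
      have hxy : Real.sqrt (ρ₁ * ρ₂) = x * y := Real.sqrt_mul hρ₁.le _
      have hyz : Real.sqrt (ρ₂ * ρ) = y * z := Real.sqrt_mul hρ₂.le _
      have hxz : Real.sqrt (ρ₁ * ρ) = x * z := Real.sqrt_mul hρ₁.le _
      rw [hxy] at hsep
      rw [hyz] at htan
      rw [hxz] at hG
      rw [← hx2] at hclose
      -- triangle inequality
      have htri : ‖a₁ - a‖ ≤ ‖a₁ - a₂‖ + ‖a₂ - a‖ := by
        have := norm_add_le (a₁ - a₂) (a₂ - a)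
        simpa using this
      have h2 : 2*z*(x - y) ≤ (2 - Real.sqrt 2) * x^2 := by
        have : 2 * (x*z) ≤ ‖a₁ - a₂‖ + 2 * (y*z) := by
          calc 2 * (x*z) ≤ ‖a₁ - a‖ := hG
            _ ≤ ‖a₁ - a₂‖ + ‖a₂ - a‖ := htri
            _ = ‖a₁ - a₂‖ + 2 * (y*z) := by rw [htan]
        nlinarith [hclose]
      have h1 : 2*x*y ≤ (2 - Real.sqrt 2) * x^2 := by nlinarith [hsep, hclose]
      have hkey := ford_key x y z hx hy hz h1 h2
      have habs : ‖a - a₁‖ ≤ ‖a₁ - a₂‖ + 2 * (y*z) := by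
        calc ‖a - a₁‖ = ‖a₁ - a‖ := by
              rw [norm_sub_rev]
          _ ≤ ‖a₁ - a₂‖ + ‖a₂ - a‖ := htri
          _ = ‖a₁ - a₂‖ + 2 * (y*z) := by rw [htan]
      nlinarith [habs, hclose, hkey]
  refine ⟨key, Metric.closedBall_subset_closedBall' ?_⟩
  rw [Complex.dist_eq]
  linarith [key]
end
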